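/- arXiv:math/0310249 — 5 statements merged into one kernel-verified Lean document; each statement's English description precedes it below -/
import Mathlib

section
/- Let N = 2. For m ≥ n, the polynomial f_{mn} satisfies D_1(x_1 f_{mn}) = (κ + m + 1) f_{mn} and D_2(x_2 f_{mn}) − κ·(1,2)f_{mn} = (n + 1) f_{mn}, where (1,2) interchanges the variables x_1 and x_2. -/
open MvPolynomial

noncomputable section

/-- Pochhammer symbol `(a)_j = a(a+1)⋯(a+j−1)`. -/
def poch (a : ℝ) (j : ℕ) : ℝ := (ascPochhammer ℝ j).eval a

/-- The coefficient of `s^a` in `∏ᵢ (1 − s xᵢ)^{−κ}`, namely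
`∑_{|α|=a} ∏ᵢ ((κ)_{αᵢ}/αᵢ!) x^α`, obtained as the degree-`a` homogeneous
component of the suitably truncated product of binomial series. -/
def genCoeff (σ : Type) [Fintype σ] [DecidableEq σ] (κ : ℝ) (a : ℕ) : MvPolynomial σ ℝ :=
  MvPolynomial.homogeneousComponent a
    (∏ i : σ, ∑ k ∈ Finset.range (a + 1), C (poch κ k / (Nat.factorial k : ℝ)) * X i ^ k)

/-- The polynomials `p_{mn}`, defined by the generating function
`∑ p_{mn} s^m t^n = (1−s x₁)⁻¹ (1−t x₂)⁻¹ ∏ᵢ ((1−s xᵢ)(1−t xᵢ))^{−κ}`;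
here `x1`, `x2` are the distinguished first and second variables. -/
def ppoly (σ : Type) [Fintype σ] [DecidableEq σ] (x1 x2 : σ) (κ : ℝ) (m n : ℕ) :
    MvPolynomial σ ℝ :=
  (∑ a ∈ Finset.range (m + 1), X x1 ^ (m - a) * genCoeff σ κ a) *
  (∑ b ∈ Finset.range (n + 1), X x2 ^ (n - b) * genCoeff σ κ b)

/-- `ω_{mn}` for `m ≥ n`. -/
def omegaAux (σ : Type) [Fintype σ] [DecidableEq σ] (x1 x2 : σ) (κ : ℝ) (m n : ℕ) :
    MvPolynomial σ ℝ :=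
  ppoly σ x1 x2 κ m n +
  ∑ j ∈ Finset.Icc 1 n,
    (poch (-κ) j * poch ((m : ℝ) - n + 1) (j - 1) /
        (poch (κ + (m : ℝ) - n + 1) j * (Nat.factorial j : ℝ))) •
      (((m : ℝ) - n + j) • ppoly σ x1 x2 κ (m + j) (n - j) +
        (j : ℝ) • ppoly σ x1 x2 κ (n - j) (m + j))

/-- `ω_{mn}` for all `m, n`: for `m ≥ n` by the explicit formula, and
`ω_{nm} = (1,2) ω_{mn}`. -/
def omegaP (σ : Type) [Fintype σ] [DecidableEq σ] (x1 x2 : σ) (κ : ℝ) (m n : ℕ) :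
    MvPolynomial σ ℝ :=
  if n ≤ m then omegaAux σ x1 x2 κ m n
  else rename (Equiv.swap x1 x2) (omegaAux σ x1 x2 κ n m)

/-- The Dunkl operator `D_i f = ∂f/∂xᵢ + κ ∑_{j≠i} (f − (i,j)f)/(xᵢ−xⱼ)`, with values
in the fraction field of the polynomial ring (the result is actually a polynomial since
`f − (i,j)f` is divisible by `xᵢ − xⱼ`). -/
def dunkl (σ : Type) [Fintype σ] [DecidableEq σ] (κ : ℝ) (i : σ) (f : MvPolynomial σ ℝ) :
    FractionRing (MvPolynomial σ ℝ) :=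
  algebraMap (MvPolynomial σ ℝ) (FractionRing (MvPolynomial σ ℝ)) (pderiv i f) +
  algebraMap (MvPolynomial σ ℝ) (FractionRing (MvPolynomial σ ℝ)) (C κ) *
    ∑ j ∈ Finset.univ.erase i,
      algebraMap (MvPolynomial σ ℝ) (FractionRing (MvPolynomial σ ℝ))
          (f - rename (Equiv.swap i j) f) /
        algebraMap (MvPolynomial σ ℝ) (FractionRing (MvPolynomial σ ℝ)) (X i - X j)

/-- The polynomials `q_{mn}`, defined by
`∑ q_{mn} u^m v^n = ∑ p_{ij} (u+v)^i (u−v)^j`; explicitly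
`q_{mn} = ∑_{i+j=m+n} p_{ij} · (coeff of u^m v^n in (u+v)^i (u−v)^j)`. -/
def qpoly (σ : Type) [Fintype σ] [DecidableEq σ] (x1 x2 : σ) (κ : ℝ) (m n : ℕ) :
    MvPolynomial σ ℝ :=
  ∑ i ∈ Finset.range (m + n + 1),
    (∑ a ∈ Finset.range (m + 1),
        (i.choose a : ℝ) * ((m + n - i).choose (m - a) : ℝ) *
          (-1 : ℝ) ^ ((m + n - i) - (m - a))) •
      ppoly σ x1 x2 κ i (m + n - i)

/-- The symmetric Krawtchouk polynomial `K_m(t;n)` with parameters `(n, 1/2)`. -/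
def kraw (n m : ℕ) (t : ℝ) : ℝ :=
  ((n.choose m : ℝ))⁻¹ *
    ∑ j ∈ Finset.range (m + 1),
      (-1 : ℝ) ^ (m - j) * poch (t - n) (m - j) * poch (-t) j /
        ((Nat.factorial (m - j) : ℝ) * (Nat.factorial j : ℝ))

/-- The two-variable polynomials `f_{mn}` (for `m ≥ n`). -/
def fmn (κ : ℝ) (m n : ℕ) : MvPolynomial (Fin 2) ℝ :=
  (X 0 * X 1) ^ n *
    ∑ j ∈ Finset.range (m - n + 1),
      C (poch (κ + 1) (m - n - j) * poch κ j /
          ((Nat.factorial (m - n - j) : ℝ) * (Nat.factorial j : ℝ))) *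
        X 0 ^ (m - n - j) * X 1 ^ j

/-- The alternating polynomial `a_N = ∏_{i<j} (xᵢ − xⱼ)`. -/
def altPoly (N : ℕ) : MvPolynomial (Fin N) ℝ :=
  ∏ p ∈ Finset.univ.filter (fun p : Fin N × Fin N => p.1 < p.2), (X p.1 - X p.2)

/-- `A_n(u;κ)`: the coefficient of `v^n` in `(1−(u+v))^{−κ} (1−(u−v))^{−κ}`,
as a formal power series in `u`. -/
def Aser (κ : ℝ) (n : ℕ) : PowerSeries ℝ :=
  PowerSeries.mk fun m =>
    ∑ k ∈ Finset.range (m + n + 1),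
      (poch κ k / (Nat.factorial k : ℝ)) *
        (poch κ (m + n - k) / (Nat.factorial (m + n - k) : ℝ)) *
        ∑ a ∈ Finset.range (m + 1),
          (k.choose a : ℝ) * ((m + n - k).choose (m - a) : ℝ) *
            (-1 : ℝ) ^ ((m + n - k) - (m - a))

/-- `B_n(u;κ)`: the coefficient of `v^n` in `(1−(u+v))^{−κ−1} (1−(u−v))^{−κ}`,
as a formal power series in `u`. -/
def Bser (κ : ℝ) (n : ℕ) : PowerSeries ℝ :=
  PowerSeries.mk fun m =>
    ∑ k ∈ Finset.range (m + n + 1),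
      (poch (κ + 1) k / (Nat.factorial k : ℝ)) *
        (poch κ (m + n - k) / (Nat.factorial (m + n - k) : ℝ)) *
        ∑ a ∈ Finset.range (m + 1),
          (k.choose a : ℝ) * ((m + n - k).choose (m - a) : ℝ) *
            (-1 : ℝ) ^ ((m + n - k) - (m - a))


/-! ### Auxiliary lemmas for `fmn_eigenfunction` -/

lemma poch_zero' (a : ℝ) : poch a 0 = 1 := by simp [poch]

lemma poch_succ_right' (a : ℝ) (j : ℕ) : poch a (j+1) = poch a j * (a + j) := by
  unfold poch; rw [ascPochhammer_succ_right]; simp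

lemma poch_succ_left' (a : ℝ) (j : ℕ) : poch a (j+1) = a * poch (a+1) j := by
  unfold poch; rw [ascPochhammer_succ_left]; simp [Polynomial.eval_comp, mul_comm]

/-- The coefficient `(κ+1)_{M-j} (κ)_j / ((M-j)! j!)` in `f_{mn}`, `M = m - n`. -/
def pcoef (κ : ℝ) (M j : ℕ) : ℝ :=
  poch (κ+1) (M-j) * poch κ j / ((Nat.factorial (M-j) : ℝ) * (Nat.factorial j : ℝ))

lemma pcoef_rec (κ : ℝ) (j k : ℕ) :
    ((j:ℝ)+1) * pcoef κ (j+k+1) (j+1)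
      = (κ + j) * pcoef κ (j+k+1) j - κ * pcoef κ (j+k+1) (k+1) := by
  unfold pcoef
  rw [show j+k+1-(j+1) = k from by omega, show j+k+1-j = k+1 from by omega,
      show j+k+1-(k+1) = j from by omega]
  rw [poch_succ_right' κ j, poch_succ_right' (κ+1) k, poch_succ_left' κ k]
  have h1 : ((Nat.factorial (j+1) : ℝ)) = (j+1) * Nat.factorial j := by
    rw [Nat.factorial_succ]; push_cast; ring
  have h2 : ((Nat.factorial (k+1) : ℝ)) = (k+1) * Nat.factorial k := by
    rw [Nat.factorial_succ]; push_cast; ring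
  have hκj : κ * poch (κ+1) j = poch κ j * (κ + j) := by
    rw [← poch_succ_left', poch_succ_right']
  rw [h1, h2]
  have fj : (Nat.factorial j : ℝ) ≠ 0 := by exact_mod_cast Nat.factorial_ne_zero j
  have fk : (Nat.factorial k : ℝ) ≠ 0 := by exact_mod_cast Nat.factorial_ne_zero k
  have hj1 : ((j:ℝ)+1) ≠ 0 := by positivity
  have hk1 : ((k:ℝ)+1) ≠ 0 := by positivity
  field_simp
  linear_combination (poch (κ+1) k * κ) * hκj

lemma pcoef_top (κ : ℝ) (M : ℕ) :
    (κ + M) * pcoef κ M M = κ * pcoef κ M 0 := by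
  unfold pcoef
  simp only [Nat.sub_self, Nat.sub_zero, poch_zero', Nat.factorial_zero]
  have h : κ * poch (κ+1) M = poch κ M * (κ + M) := by
    rw [← poch_succ_left', poch_succ_right']
  have fM : (Nat.factorial M : ℝ) ≠ 0 := by exact_mod_cast Nat.factorial_ne_zero M
  field_simp
  linear_combination (-1 : ℝ) * h

/-- the `B_j` monomial -/
def Bm (n M j : ℕ) : MvPolynomial (Fin 2) ℝ := X 0 ^ (n+(M-j)) * X 1 ^ (n+j+1)

lemma keyE (κ : ℝ) (n M : ℕ) :
    ∑ j ∈ Finset.range (M+1), C (pcoef κ M j) *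
      (C (j:ℝ) * (X 0 ^ (n+(M-j)+1) * X 1 ^ (n+j))
       - C (κ + j) * (X 0 ^ (n+(M-j)) * X 1 ^ (n+j+1))
       + C κ * (X 0 ^ (n+j) * X 1 ^ (n+(M-j)+1))) = (0 : MvPolynomial (Fin 2) ℝ) := by
  have expand : ∀ j ∈ Finset.range (M+1),
      C (pcoef κ M j) *
      (C (j:ℝ) * (X 0 ^ (n+(M-j)+1) * X 1 ^ (n+j))
       - C (κ + j) * (X 0 ^ (n+(M-j)) * X 1 ^ (n+j+1))
       + C κ * (X 0 ^ (n+j) * X 1 ^ (n+(M-j)+1)))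
      = (C ((j:ℝ) * pcoef κ M j) * (X 0 ^ (n+(M-j)+1) * X 1 ^ (n+j))
         - C ((κ + j) * pcoef κ M j) * Bm n M j)
        + C (κ * pcoef κ M j) * (X 0 ^ (n+j) * X 1 ^ (n+(M-j)+1)) := by
    intro j hj
    simp only [C_mul, Bm]; ring
  rw [Finset.sum_congr rfl expand, Finset.sum_add_distrib, Finset.sum_sub_distrib]
  have h3 : ∑ j ∈ Finset.range (M+1), C (κ * pcoef κ M j) * (X 0 ^ (n+j) * X 1 ^ (n+(M-j)+1))
      = ∑ j ∈ Finset.range (M+1), C (κ * pcoef κ M (M-j)) * Bm n M j := by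
    rw [← Finset.sum_range_reflect]
    apply Finset.sum_congr rfl
    intro j hj
    have hj' : j ≤ M := by simpa [Nat.lt_succ_iff] using hj
    rw [show M + 1 - 1 - j = M - j from by omega, show M - (M-j) = j from by omega, Bm]
  have h1 : ∑ j ∈ Finset.range (M+1), C ((j:ℝ) * pcoef κ M j) * (X 0 ^ (n+(M-j)+1) * X 1 ^ (n+j))
      = ∑ j ∈ Finset.range M, C (((j:ℝ)+1) * pcoef κ M (j+1)) * Bm n M j := by
    rw [Finset.sum_range_succ']
    simp only [Nat.cast_zero, zero_mul, map_zero, zero_mul, add_zero]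
    apply Finset.sum_congr rfl
    intro j hj
    have hj' : j < M := Finset.mem_range.mp hj
    rw [show n + (M - (j+1)) + 1 = n + (M - j) from by omega, Bm]
    push_cast
    ring
  rw [h1, h3]
  rw [Finset.sum_range_succ (fun j => C ((κ + (j:ℝ)) * pcoef κ M j) * Bm n M j),
      Finset.sum_range_succ (fun j => C (κ * pcoef κ M (M-j)) * Bm n M j)]
  have htop : C (κ * pcoef κ M (M-M)) * Bm n M M - C ((κ + (M:ℝ)) * pcoef κ M M) * Bm n M M = 0 := by
    rw [Nat.sub_self, ← sub_mul, ← map_sub, ← pcoef_top κ M, sub_self, map_zero, zero_mul]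
  have hmid : ∀ j ∈ Finset.range M,
      C (((j:ℝ)+1) * pcoef κ M (j+1)) * Bm n M j - C ((κ + (j:ℝ)) * pcoef κ M j) * Bm n M j
        + C (κ * pcoef κ M (M-j)) * Bm n M j = 0 := by
    intro j hj
    have hj' : j < M := Finset.mem_range.mp hj
    have hrec := pcoef_rec κ j (M - j - 1)
    rw [show j + (M-j-1) + 1 = M from by omega, show M-j-1+1 = M-j from by omega] at hrec
    rw [← sub_mul, ← add_mul, ← map_sub, ← map_add]
    rw [show (((j:ℝ)+1) * pcoef κ M (j+1) - (κ + (j:ℝ)) * pcoef κ M j + κ * pcoef κ M (M-j)) = 0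
        from by linarith [hrec]]
    simp
  calc ∑ j ∈ Finset.range M, C (((j:ℝ)+1) * pcoef κ M (j+1)) * Bm n M j
        - (∑ j ∈ Finset.range M, C ((κ + (j:ℝ)) * pcoef κ M j) * Bm n M j
            + C ((κ + (M:ℝ)) * pcoef κ M M) * Bm n M M)
        + (∑ j ∈ Finset.range M, C (κ * pcoef κ M (M-j)) * Bm n M j
            + C (κ * pcoef κ M (M-M)) * Bm n M M)
      = (∑ j ∈ Finset.range M, (C (((j:ℝ)+1) * pcoef κ M (j+1)) * Bm n M j
          - C ((κ + (j:ℝ)) * pcoef κ M j) * Bm n M j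
          + C (κ * pcoef κ M (M-j)) * Bm n M j))
        + (C (κ * pcoef κ M (M-M)) * Bm n M M - C ((κ + (M:ℝ)) * pcoef κ M M) * Bm n M M) := by
        rw [Finset.sum_add_distrib, Finset.sum_sub_distrib]; ring
    _ = 0 := by rw [Finset.sum_congr rfl hmid, htop]; simp

lemma keyE' (κ : ℝ) (n M : ℕ) :
    ∑ j ∈ Finset.range (M+1), C (pcoef κ M j) *
      (C (κ + j) * (X 0 ^ (n+(M-j)) * X 1 ^ (n+j+1))
       - C (j:ℝ) * (X 0 ^ (n+(M-j)+1) * X 1 ^ (n+j))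
       - C κ * (X 0 ^ (n+j) * X 1 ^ (n+(M-j)+1))) = (0 : MvPolynomial (Fin 2) ℝ) := by
  have h := keyE κ n M
  rw [← neg_eq_zero, ← Finset.sum_neg_distrib]
  exact (Finset.sum_congr rfl fun j _ => by ring).trans h

/-- Expanded form of `f_{mn}`. -/
def FF (κ : ℝ) (n M : ℕ) : MvPolynomial (Fin 2) ℝ :=
  ∑ j ∈ Finset.range (M+1), C (pcoef κ M j) * (X 0 ^ (n+(M-j)) * X 1 ^ (n+j))

lemma lemA (κ : ℝ) (n M : ℕ) :
    (X 0 - X 1) * pderiv 0 (X 0 * FF κ n M)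
      + C κ * (X 0 * FF κ n M - rename (Equiv.swap (0:Fin 2) 1) (X 0 * FF κ n M))
      = (X 0 - X 1) * (C (κ + (n:ℝ) + (M:ℝ) + 1) * FF κ n M) := by
  have hXF : X 0 * FF κ n M
      = ∑ j ∈ Finset.range (M+1), C (pcoef κ M j) * (X 0 ^ (n+(M-j)+1) * X 1 ^ (n+j)) := by
    rw [FF, Finset.mul_sum]
    exact Finset.sum_congr rfl fun j _ => by ring
  rw [← sub_eq_zero, ← keyE' κ n M, hXF, FF]
  simp only [map_sum, Finset.mul_sum, ← Finset.sum_sub_distrib, ← Finset.sum_add_distrib]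
  refine Finset.sum_congr rfl fun j hj => ?_
  have hj' : j ≤ M := by simpa [Nat.lt_succ_iff] using hj
  simp only [pderiv_mul, pderiv_C, pderiv_X, map_mul, map_pow, rename_C, rename_X,
    Equiv.swap_apply_left, Equiv.swap_apply_right]
  simp
  push_cast [Nat.cast_sub hj']
  ring

lemma lemB (κ : ℝ) (n M : ℕ) :
    (X 1 - X 0) * pderiv 1 (X 1 * FF κ n M)
      + C κ * (X 1 * FF κ n M - rename (Equiv.swap (0:Fin 2) 1) (X 1 * FF κ n M))
      - (X 1 - X 0) * (C κ * rename (Equiv.swap (0:Fin 2) 1) (FF κ n M))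
      = (X 1 - X 0) * (C ((n:ℝ) + 1) * FF κ n M) := by
  have hXF : X 1 * FF κ n M
      = ∑ j ∈ Finset.range (M+1), C (pcoef κ M j) * (X 0 ^ (n+(M-j)) * X 1 ^ (n+j+1)) := by
    rw [FF, Finset.mul_sum]
    exact Finset.sum_congr rfl fun j _ => by ring
  rw [← sub_eq_zero, ← keyE' κ n M, hXF, FF]
  simp only [map_sum, Finset.mul_sum, ← Finset.sum_sub_distrib, ← Finset.sum_add_distrib]
  refine Finset.sum_congr rfl fun j hj => ?_
  have hj' : j ≤ M := by simpa [Nat.lt_succ_iff] using hj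
  simp only [pderiv_mul, pderiv_C, pderiv_X, map_mul, map_pow, rename_C, rename_X,
    Equiv.swap_apply_left, Equiv.swap_apply_right]
  simp
  ring

lemma fieldAux {K : Type*} [Field K] (a b c d e : K) (hd : d ≠ 0)
    (h : a * d + c * b = e * d) : a + c * (b / d) = e := by
  field_simp
  linear_combination h

lemma fieldAux2 {K : Type*} [Field K] (a b c d e s : K) (hd : d ≠ 0)
    (h : a * d + c * b - s * d = e * d) : a + c * (b / d) - s = e := by
  field_simp
  linear_combination h

lemma fmn_eq (κ : ℝ) (n M : ℕ) : fmn κ (n+M) n = FF κ n M := by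
  unfold fmn FF pcoef
  rw [show n + M - n = M from by omega, Finset.mul_sum]
  exact Finset.sum_congr rfl fun j _ => by rw [mul_pow]; ring

/-- For `N = 2` and `m ≥ n`:
`D₁(x₁ f_{mn}) = (κ+m+1) f_{mn}` and `D₂(x₂ f_{mn}) − κ·(1,2)f_{mn} = (n+1) f_{mn}`. -/
theorem fmn_eigenfunction (κ : ℝ) (m n : ℕ) (hmn : n ≤ m) :
    dunkl (Fin 2) κ 0 (X 0 * fmn κ m n) =
      algebraMap (MvPolynomial (Fin 2) ℝ) (FractionRing (MvPolynomial (Fin 2) ℝ))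
        ((κ + (m : ℝ) + 1) • fmn κ m n) ∧
    dunkl (Fin 2) κ 1 (X 1 * fmn κ m n) -
        algebraMap (MvPolynomial (Fin 2) ℝ) (FractionRing (MvPolynomial (Fin 2) ℝ))
          (C κ * rename (Equiv.swap (0 : Fin 2) 1) (fmn κ m n)) =
      algebraMap (MvPolynomial (Fin 2) ℝ) (FractionRing (MvPolynomial (Fin 2) ℝ))
        (((n : ℝ) + 1) • fmn κ m n) := by
  obtain ⟨M, rfl⟩ : ∃ M, m = n + M := ⟨m - n, (Nat.add_sub_cancel' hmn).symm⟩
  rw [fmn_eq]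
  set R := MvPolynomial (Fin 2) ℝ
  set K := FractionRing R
  set φ := algebraMap R K with hφ
  have hinj : Function.Injective φ := IsFractionRing.injective R K
  have hne01 : (X 0 - X 1 : R) ≠ 0 := by
    intro h
    have := congrArg (eval (fun i : Fin 2 => if i = 0 then (1:ℝ) else 0)) h
    simp at this
  have hne10 : (X 1 - X 0 : R) ≠ 0 := by
    intro h; apply hne01; rw [← neg_sub, h, neg_zero]
  have hden01 : φ (X 0 - X 1) ≠ 0 := (map_ne_zero_iff φ hinj).mpr hne01
  have hden10 : φ (X 1 - X 0) ≠ 0 := (map_ne_zero_iff φ hinj).mpr hne10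
  constructor
  · rw [dunkl, show (Finset.univ.erase (0 : Fin 2)) = {1} from by decide,
      Finset.sum_singleton]
    apply fieldAux _ _ _ _ _ hden01
    simp only [R, K, φ, ← map_mul, ← map_add]
    apply congrArg (algebraMap _ _)
    rw [smul_eq_C_mul,
      show (κ + ((n + M : ℕ) : ℝ) + 1) = (κ + (n:ℝ) + (M:ℝ) + 1) from by push_cast; ring]
    linear_combination lemA κ n M
  · rw [dunkl, show (Finset.univ.erase (1 : Fin 2)) = {0} from by decide,
      Finset.sum_singleton, Equiv.swap_comm]
    apply fieldAux2 _ _ _ _ _ _ hden10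
    simp only [R, K, φ, ← map_mul, ← map_add, ← map_sub]
    apply congrArg (algebraMap _ _)
    rw [smul_eq_C_mul]
    linear_combination lemB κ n M
end
end

section
/- Let n ∈ ℕ and suppose f = Σ_{i=0}^n c_i p_{n−i,i} with coefficients c_i ∈ ℚ(κ). Then f = 2^{−n} Σ_{i=0}^n q_{n−i,i} · (Σ_{j=0}^n binom(n,j) c_j K_i(j;n)). -/
open MvPolynomial

noncomputable section

namespace PQAux
open Polynomial Finset

def Vb (n a i : ℕ) : ℝ :=
  ∑ l ∈ range (a+1), (-1:ℝ)^l * (i.choose l) * ((n-i).choose (a-l))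

lemma coeff_one_sub_X_pow (S : Type*) [CommRing S] (w p : ℕ) :
    ((1 - Polynomial.X : S[X])^w).coeff p = (-1:S)^p * (w.choose p) := by
  have h : (1 - Polynomial.X : S[X]) = (-Polynomial.X) + 1 := by ring
  rw [h, add_pow]
  rw [Polynomial.finset_sum_coeff]
  have hterm : ∀ l ∈ range (w+1),
      ((-Polynomial.X : S[X])^l * 1^(w-l) * (w.choose l : S[X])).coeff p
        = if l = p then (-1:S)^p * (w.choose p) else 0 := by
    intro l hl
    rw [neg_pow, one_pow, mul_one]
    rw [show ((-1:S[X])^l * Polynomial.X^l * (w.choose l : S[X])) = Polynomial.C ((-1:S)^l * (w.choose l : S)) * Polynomial.X^l by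
      rw [← Polynomial.C_eq_natCast, map_mul, map_pow, map_neg, map_one]; ring]
    rw [Polynomial.coeff_C_mul, Polynomial.coeff_X_pow]
    by_cases hlp : l = p
    · simp [hlp]
    · simp only [if_neg (Ne.symm hlp), if_neg hlp, mul_zero]
  rw [Finset.sum_congr rfl hterm]
  by_cases hp : p ∈ range (w+1)
  · rw [Finset.sum_ite_eq' (range (w+1)) p, if_pos hp]
  · rw [Finset.sum_ite_eq' (range (w+1)) p, if_neg hp]
    rw [Nat.choose_eq_zero_of_lt (by simpa using hp)]
    simp

lemma coeffA (S : Type*) [CommRing S] (w m a : ℕ) :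
    (((1 - Polynomial.X)^w * (1 + Polynomial.X)^m : S[X])).coeff a
      = ∑ l ∈ range (a+1), (-1:S)^l * (w.choose l) * (m.choose (a-l)) := by
  rw [Polynomial.coeff_mul, Finset.Nat.sum_antidiagonal_eq_sum_range_succ_mk]
  refine Finset.sum_congr rfl fun l hl => ?_
  rw [coeff_one_sub_X_pow, Polynomial.coeff_one_add_X_pow]

lemma Vb_eq_coeff (n a i : ℕ) :
    Vb n a i = (((1 - Polynomial.X)^i * (1 + Polynomial.X)^(n-i) : ℝ[X])).coeff a := by
  rw [coeffA]; rfl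

lemma neg_one_pow_sub {w d : ℕ} (h : d ≤ w) : (-1:ℝ)^(w-d) = (-1)^w * (-1)^d := by
  conv_rhs => rw [← Nat.sub_add_cancel h, pow_add]
  rw [mul_assoc, ← mul_pow]
  norm_num

lemma nat_key {n a i l : ℕ} (ha : a ≤ n) (hi : i ≤ n) (hla : l ≤ a) (hli : l ≤ i) :
    n.choose a * a.choose l * (n-a).choose (i-l)
      = n.choose i * i.choose l * (n-i).choose (a-l) := by
  rw [Nat.choose_mul (n := n) hla, Nat.choose_mul (n := n) hli]
  rcases le_or_gt ((a-l)+(i-l)) (n-l) with hpq | hpq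
  · have e1 := Nat.choose_mul (n := n-l) (Nat.le_add_right (a-l) (i-l))
    have e2 := Nat.choose_mul (n := n-l) (Nat.le_add_left (i-l) (a-l))
    rw [Nat.add_sub_cancel_left, show n - l - (a-l) = n - a by omega] at e1
    rw [Nat.add_sub_cancel, show n - l - (i-l) = n - i by omega] at e2
    have hsym : ((a-l)+(i-l)).choose (a-l) = ((a-l)+(i-l)).choose (i-l) := by
      rw [← Nat.choose_symm (Nat.le_add_left (i-l) (a-l)), Nat.add_sub_cancel]
    calc n.choose l * (n - l).choose (a - l) * (n - a).choose (i - l)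
        = n.choose l * ((n - l).choose (a-l) * (n - a).choose (i - l)) := by ring
      _ = n.choose l * ((n-l).choose ((a-l)+(i-l)) * ((a-l)+(i-l)).choose (a-l)) := by rw [e1]
      _ = n.choose l * ((n-l).choose ((a-l)+(i-l)) * ((a-l)+(i-l)).choose (i-l)) := by rw [hsym]
      _ = n.choose l * ((n - l).choose (i-l) * (n - i).choose (a - l)) := by rw [e2]
      _ = n.choose l * (n - l).choose (i - l) * (n - i).choose (a - l) := by ring
  · rw [Nat.choose_eq_zero_of_lt (show n - a < i - l by omega),
      Nat.choose_eq_zero_of_lt (show n - i < a - l by omega), mul_zero, mul_zero]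

lemma dual (n a i : ℕ) (ha : a ≤ n) (hi : i ≤ n) :
    (n.choose a : ℝ) * Vb n i a = (n.choose i : ℝ) * Vb n a i := by
  rw [Vb, Vb, Finset.mul_sum, Finset.mul_sum]
  have h1 : ∑ l ∈ range (i+1), (n.choose a : ℝ) * ((-1)^l * (a.choose l) * ((n-a).choose (i-l)))
      = ∑ l ∈ range (min i a + 1), (n.choose a : ℝ) * ((-1)^l * (a.choose l) * ((n-a).choose (i-l))) := by
    refine (Finset.sum_subset (by intro l hl; simp only [mem_range] at *; omega) ?_).symm
    intro l hl hnl
    simp only [mem_range] at hl hnl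
    rw [Nat.choose_eq_zero_of_lt (show a < l by omega)]
    simp
  have h2 : ∑ l ∈ range (a+1), (n.choose i : ℝ) * ((-1)^l * (i.choose l) * ((n-i).choose (a-l)))
      = ∑ l ∈ range (min i a + 1), (n.choose i : ℝ) * ((-1)^l * (i.choose l) * ((n-i).choose (a-l))) := by
    refine (Finset.sum_subset (by intro l hl; simp only [mem_range] at *; omega) ?_).symm
    intro l hl hnl
    simp only [mem_range] at hl hnl
    rw [Nat.choose_eq_zero_of_lt (show i < l by omega)]
    simp
  rw [h1, h2]
  refine Finset.sum_congr rfl fun l hl => ?_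
  simp only [mem_range] at hl
  have key := nat_key (l := l) ha hi (by omega) (by omega)
  calc (n.choose a : ℝ) * ((-1)^l * (a.choose l) * ((n-a).choose (i-l)))
      = (-1)^l * ((n.choose a * a.choose l * (n-a).choose (i-l) : ℕ) : ℝ) := by push_cast; ring
    _ = (-1)^l * ((n.choose i * i.choose l * (n-i).choose (a-l) : ℕ) : ℝ) := by rw [key]
    _ = (n.choose i : ℝ) * ((-1)^l * (i.choose l) * ((n-i).choose (a-l))) := by push_cast; ring

lemma reflectVb (n a w : ℕ) (ha : a ≤ n) (hw : w ≤ n) :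
    Vb n (n-a) w = (-1:ℝ)^w * Vb n a w := by
  rw [Vb, Vb, Finset.mul_sum]
  have h1 : ∑ l ∈ range (n-a+1), (-1:ℝ)^l * (w.choose l) * ((n-w).choose ((n-a)-l))
      = ∑ l ∈ (range (n-a+1)).filter (fun l => l ≤ w ∧ w ≤ a + l),
          (-1:ℝ)^l * (w.choose l) * ((n-w).choose ((n-a)-l)) := by
    refine (Finset.sum_subset (Finset.filter_subset _ _) ?_).symm
    intro l hl hnl
    simp only [mem_filter, mem_range] at hl hnl
    rcases le_or_gt l w with hlw | hlw
    · rw [Nat.choose_eq_zero_of_lt (show n - w < (n-a) - l by omega)]; simp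
    · rw [Nat.choose_eq_zero_of_lt hlw]; simp
  have h2 : ∑ l ∈ range (a+1), (-1:ℝ)^w * ((-1)^l * (w.choose l) * ((n-w).choose (a-l)))
      = ∑ l ∈ (range (a+1)).filter (fun l => l ≤ w ∧ w ≤ (n-a) + l),
          (-1:ℝ)^w * ((-1)^l * (w.choose l) * ((n-w).choose (a-l))) := by
    refine (Finset.sum_subset (Finset.filter_subset _ _) ?_).symm
    intro l hl hnl
    simp only [mem_filter, mem_range] at hl hnl
    rcases le_or_gt l w with hlw | hlw
    · rw [Nat.choose_eq_zero_of_lt (show n - w < a - l by omega)]; simp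
    · rw [Nat.choose_eq_zero_of_lt hlw]; simp
  rw [h1, h2]
  refine Finset.sum_nbij' (fun l => w - l) (fun l => w - l) ?_ ?_ ?_ ?_ ?_
  · intro l hl; simp only [mem_filter, mem_range] at *; omega
  · intro l hl; simp only [mem_filter, mem_range] at *; omega
  · intro l hl; simp only [mem_filter, mem_range] at hl; show w - (w - l) = l; omega
  · intro l hl; simp only [mem_filter, mem_range] at hl; show w - (w - l) = l; omega
  · intro l hl
    simp only [mem_filter, mem_range] at hl
    obtain ⟨hl1, hl2, hl3⟩ := hl
    rw [Nat.choose_symm hl2, show a - (w - l) = (n-w) - ((n-a)-l) by omega,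
      Nat.choose_symm (show (n-a) - l ≤ n - w by omega), neg_one_pow_sub hl2]
    have hww : (-1:ℝ)^w * (-1)^w = 1 := by rw [← mul_pow]; norm_num
    linear_combination (-((-1:ℝ)^l) * (w.choose l : ℝ) * (((n-w).choose ((n-a)-l)) : ℝ)) * hww

lemma orth (n a b : ℕ) (hb : b ≤ n) :
    ∑ i ∈ range (n+1), (n.choose i : ℝ) * Vb n a i * Vb n b i
      = if b = a then 2^n * (n.choose b : ℝ) else 0 := by
  have key := add_pow ((1 - Polynomial.C Polynomial.X) * (1 - Polynomial.X) : (Polynomial ℝ)[X])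
    ((1 + Polynomial.C Polynomial.X) * (1 + Polynomial.X)) n
  have hsum : ((1 - Polynomial.C Polynomial.X) * (1 - Polynomial.X) : (Polynomial ℝ)[X])
      + (1 + Polynomial.C Polynomial.X) * (1 + Polynomial.X)
      = Polynomial.C (Polynomial.C 2) * (1 + Polynomial.C Polynomial.X * Polynomial.X) := by
    have : (Polynomial.C (Polynomial.C (2:ℝ)) : (Polynomial ℝ)[X]) = 2 := by
      simp [map_ofNat]
    rw [this]; ring
  rw [hsum, mul_pow] at key
  -- rewrite each summand of the LHS of key
  have hterm : ∀ i,
      ((1 - Polynomial.C Polynomial.X) * (1 - Polynomial.X) : (Polynomial ℝ)[X])^i *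
        ((1 + Polynomial.C Polynomial.X) * (1 + Polynomial.X))^(n-i) * (n.choose i : (Polynomial ℝ)[X])
      = Polynomial.C ((1 - Polynomial.X)^i * (1 + Polynomial.X)^(n-i) * (n.choose i : Polynomial ℝ))
          * ((1 - Polynomial.X)^i * (1 + Polynomial.X)^(n-i)) := by
    intro i
    rw [mul_pow, mul_pow, map_mul, map_mul, map_pow, map_pow, map_sub, map_add, map_one,
      ← Polynomial.C_eq_natCast, map_natCast]
    ring
  have hVbC : ∀ (m : ℕ) (i : ℕ),
      (((1 - Polynomial.X)^i * (1 + Polynomial.X)^(n-i) : (Polynomial ℝ)[X])).coeff m = Polynomial.C (Vb n m i) := by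
    intro m i
    rw [coeffA, Vb, map_sum]
    refine Finset.sum_congr rfl fun l _ => ?_
    rw [map_mul, map_mul, map_pow, map_neg, map_one, ← Polynomial.C_eq_natCast,
      ← Polynomial.C_eq_natCast]
  rw [Finset.sum_congr rfl (fun i _ => hterm i)] at key
  have hcb := congrArg (fun p => (Polynomial.coeff p b).coeff a) key
  simp only [Polynomial.finset_sum_coeff, Polynomial.coeff_C_mul, hVbC,
    Polynomial.coeff_mul_C] at hcb
  have hg : ∀ i : ℕ, (((1 - Polynomial.X)^i * (1 + Polynomial.X)^(n-i) * ((n.choose i : ℕ) : Polynomial ℝ))).coeff a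
      = Vb n a i * (n.choose i : ℝ) := by
    intro i
    rw [← Polynomial.C_eq_natCast, Polynomial.coeff_mul_C, coeffA, Vb]
  simp only [hg] at hcb
  -- now compute the left side of hcb
  have hRHS : ((Polynomial.C (Polynomial.C (2:ℝ)) ^ n *
      (1 + Polynomial.C Polynomial.X * Polynomial.X) ^ n : (Polynomial ℝ)[X]).coeff b).coeff a
      = if b = a then 2 ^ n * (n.choose b : ℝ) else 0 := by
    have h1 : ((1 + Polynomial.C Polynomial.X * Polynomial.X) ^ n : (Polynomial ℝ)[X])
        = ∑ t ∈ range (n+1), Polynomial.C (Polynomial.X ^ t * (n.choose t : Polynomial ℝ)) * Polynomial.X ^ t := by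
      rw [show (1 + Polynomial.C Polynomial.X * Polynomial.X : (Polynomial ℝ)[X])
          = Polynomial.C Polynomial.X * Polynomial.X + 1 by ring, add_pow]
      refine Finset.sum_congr rfl fun t _ => ?_
      rw [map_mul, map_pow, ← Polynomial.C_eq_natCast,
        map_natCast, mul_pow, one_pow]
      ring
    rw [h1, ← map_pow, Polynomial.coeff_C_mul, Polynomial.finset_sum_coeff, Finset.mul_sum]
    have h2 : ∀ t ∈ range (n+1),
        Polynomial.C (2:ℝ) ^ n * ((Polynomial.C (Polynomial.X ^ t * (n.choose t : Polynomial ℝ)) * Polynomial.X ^ t).coeff b)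
        = if t = b then Polynomial.C (2:ℝ) ^ n * (Polynomial.X ^ b * (n.choose b : Polynomial ℝ)) else 0 := by
      intro t _
      rw [Polynomial.coeff_C_mul, Polynomial.coeff_X_pow]
      by_cases ht : t = b
      · subst ht; simp
      · rw [if_neg fun h => ht h.symm, if_neg ht, mul_zero, mul_zero]
    rw [Finset.sum_congr rfl h2, Finset.sum_ite_eq' (range (n+1)) b,
      if_pos (Finset.mem_range.mpr (Nat.lt_succ_of_le hb))]
    rw [show (Polynomial.C (2:ℝ) ^ n * (Polynomial.X ^ b * ((n.choose b : ℕ) : Polynomial ℝ)))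
        = Polynomial.C ((2:ℝ)^n * (n.choose b : ℝ)) * Polynomial.X ^ b by
      rw [map_mul, map_pow, ← Polynomial.C_eq_natCast]; ring]
    rw [Polynomial.coeff_C_mul, Polynomial.coeff_X_pow]
    by_cases hab : b = a
    · subst hab; simp
    · rw [if_neg fun h => hab h.symm, if_neg hab, mul_zero]
  rw [hRHS] at hcb
  calc ∑ i ∈ range (n+1), (n.choose i : ℝ) * Vb n a i * Vb n b i
      = ∑ i ∈ range (n+1), Vb n a i * (n.choose i : ℝ) * Vb n b i :=
        Finset.sum_congr rfl fun i _ => by ring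
    _ = _ := hcb.symm

lemma step1 (m w k : ℕ) :
    ∑ a ∈ range (m+1), (k.choose a : ℝ) * (w.choose (m-a)) * (-1)^(w-(m-a))
      = (-1:ℝ)^w * ∑ l ∈ range (m+1), (-1:ℝ)^l * (w.choose l : ℝ) * (k.choose (m-l) : ℝ) := by
  rw [Finset.mul_sum,
    ← Finset.sum_range_reflect (fun l => (-1:ℝ)^w * ((-1:ℝ)^l * (w.choose l : ℝ) * (k.choose (m-l) : ℝ))) (m+1)]
  refine Finset.sum_congr rfl fun a ha => ?_
  simp only [mem_range] at ha
  rw [show m + 1 - 1 - a = m - a by omega, show m - (m - a) = a by omega]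
  rcases le_or_gt (m - a) w with hd | hd
  · rw [neg_one_pow_sub hd]; ring
  · rw [Nat.choose_eq_zero_of_lt hd]; simp

lemma qcoeff (n i k : ℕ) (hi : i ≤ n) (hk : k ≤ n) :
    ∑ a ∈ range ((n-i)+1),
        (k.choose a : ℝ) * ((n-k).choose ((n-i)-a)) * (-1)^((n-k)-((n-i)-a))
      = Vb n i (n-k) := by
  rw [step1 (n-i) (n-k) k]
  have : Vb n (n-i) (n-k)
      = ∑ l ∈ range ((n-i)+1), (-1:ℝ)^l * (((n-k).choose l) : ℝ) * ((k.choose ((n-i)-l)) : ℝ) := by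
    rw [Vb, show n - (n-k) = k by omega]
  rw [← this, reflectVb n i (n-k) hi (by omega), ← mul_assoc, ← mul_pow]
  norm_num

lemma poch_neg_nat (m c : ℕ) : poch (-(m:ℝ)) c = (-1:ℝ)^c * (m.descFactorial c : ℝ) := by
  rw [poch, ascPochhammer_eval_neg_eq_descPochhammer, descPochhammer_eval_eq_descFactorial]

lemma kraw_eq (n i j : ℕ) (hj : j ≤ n) :
    kraw n i (j:ℝ) = Vb n i j / (n.choose i : ℝ) := by
  rw [kraw, Vb, div_eq_inv_mul]
  congr 1
  refine Finset.sum_congr rfl fun l hl => ?_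
  have h1 : ((j:ℝ) - n) = -(((n-j : ℕ)):ℝ) := by rw [Nat.cast_sub hj]; ring
  rw [h1, poch_neg_nat, poch_neg_nat,
    Nat.descFactorial_eq_factorial_mul_choose, Nat.descFactorial_eq_factorial_mul_choose]
  have hf1 : ((i-l).factorial : ℝ) ≠ 0 := Nat.cast_ne_zero.mpr (Nat.factorial_ne_zero _)
  have hf2 : (l.factorial : ℝ) ≠ 0 := Nat.cast_ne_zero.mpr (Nat.factorial_ne_zero _)
  have hsq : (-1:ℝ)^(i-l) * (-1)^(i-l) = 1 := by rw [← mul_pow]; norm_num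
  push_cast
  field_simp
  linear_combination (((n-j).choose (i-l) : ℝ) * (j.choose l : ℝ)) * hsq

lemma chooseR_ne_zero {n j : ℕ} (h : j ≤ n) : (n.choose j : ℝ) ≠ 0 :=
  Nat.cast_ne_zero.mpr (Nat.choose_pos h).ne'

lemma alg_step {ci cj ck v1 v2 w1 w2 : ℝ} (hci : ci ≠ 0) (hcj : cj ≠ 0) (hck : ck ≠ 0)
    (d1 : cj * v1 = ci * w1) (d2 : ck * v2 = ci * w2) :
    v1 * v2 / ci = ci * w1 * w2 / (cj * ck) := by
  field_simp
  linear_combination (ck * v2) * d1 + (ci * w1) * d2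

lemma inner_orth (n j k : ℕ) (hj : j ≤ n) (hk : k ≤ n) :
    ∑ i ∈ range (n+1), Vb n i j * Vb n i (n-k) / (n.choose i : ℝ)
      = if n-k = j then 2^n / (n.choose (n-k) : ℝ) else 0 := by
  have hcj := chooseR_ne_zero hj
  have hck := chooseR_ne_zero (show n-k ≤ n by omega)
  have hck2 := chooseR_ne_zero hk
  have step : ∀ i ∈ range (n+1), Vb n i j * Vb n i (n-k) / (n.choose i : ℝ)
      = ((n.choose i :ℝ) * Vb n j i * Vb n (n-k) i) / ((n.choose j : ℝ) * (n.choose (n-k) : ℝ)) := by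
    intro i hi
    simp only [mem_range] at hi
    have hci := chooseR_ne_zero (show i ≤ n by omega)
    have hck2 := chooseR_ne_zero hk
    exact alg_step hci hcj hck (dual n j i hj (by omega)) (dual n (n-k) i (by omega) (by omega))
  rw [Finset.sum_congr rfl step, ← Finset.sum_div, orth n j (n-k) (by omega)]
  by_cases h : n - k = j
  · rw [if_pos h, if_pos h, ← h]
    field_simp
    try ring
  · rw [if_neg h, if_neg h, zero_div]


lemma scalar_key (n k : ℕ) (hk : k ≤ n) (c : ℕ → ℝ) :
    ((2:ℝ)^n)⁻¹ * ∑ i ∈ range (n+1),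
        (∑ j ∈ range (n+1), (n.choose j : ℝ) * c j * kraw n i (j:ℝ)) *
        (∑ a ∈ range ((n-i)+1),
          (k.choose a : ℝ) * ((n-k).choose ((n-i)-a)) * (-1:ℝ)^((n-k)-((n-i)-a)))
      = c (n-k) := by
  have h1 : ∀ i ∈ range (n+1),
      (∑ j ∈ range (n+1), (n.choose j : ℝ) * c j * kraw n i (j:ℝ)) *
        (∑ a ∈ range ((n-i)+1),
          (k.choose a : ℝ) * ((n-k).choose ((n-i)-a)) * (-1:ℝ)^((n-k)-((n-i)-a)))
      = ∑ j ∈ range (n+1),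
          (n.choose j : ℝ) * c j * (Vb n i j * Vb n i (n-k) / (n.choose i : ℝ)) := by
    intro i hi
    simp only [mem_range] at hi
    rw [qcoeff n i k (by omega) hk, Finset.sum_mul]
    refine Finset.sum_congr rfl fun j hj => ?_
    simp only [mem_range] at hj
    rw [kraw_eq n i j (by omega)]
    ring
  rw [Finset.sum_congr rfl h1, Finset.sum_comm]
  have h2 : ∀ j ∈ range (n+1),
      ∑ i ∈ range (n+1), (n.choose j : ℝ) * c j * (Vb n i j * Vb n i (n-k) / (n.choose i : ℝ))
      = (n.choose j : ℝ) * c j * (if n-k = j then 2^n / (n.choose (n-k) : ℝ) else 0) := by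
    intro j hj
    simp only [mem_range] at hj
    rw [← Finset.mul_sum, inner_orth n j k (by omega) hk]
  rw [Finset.sum_congr rfl h2]
  have h3 : ∀ j ∈ range (n+1),
      (n.choose j : ℝ) * c j * (if n-k = j then 2^n / (n.choose (n-k) : ℝ) else 0)
      = if j = n-k then (n.choose (n-k) : ℝ) * c (n-k) * (2^n / (n.choose (n-k) : ℝ)) else 0 := by
    intro j _
    by_cases h : n - k = j
    · rw [if_pos h, if_pos h.symm, ← h]
    · rw [if_neg h, if_neg fun hh => h hh.symm, mul_zero]
  rw [Finset.sum_congr rfl h3, Finset.sum_ite_eq' (range (n+1)) (n-k),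
    if_pos (mem_range.mpr (by omega))]
  have hck := chooseR_ne_zero (show n-k ≤ n by omega)
  have hck2 := chooseR_ne_zero hk
  field_simp


end PQAux

/-- If `f = ∑_{i=0}^n cᵢ p_{n−i,i}` then
`f = 2^{−n} ∑_{i=0}^n q_{n−i,i} · (∑_{j=0}^n binom(n,j) cⱼ Kᵢ(j;n))`. -/
theorem p_to_q_expansion (N : ℕ) (hN : 2 ≤ N) (κ : ℝ) (n : ℕ) (hn : 1 ≤ n) (c : ℕ → ℝ) :
    ∑ i ∈ Finset.range (n + 1),
        c i • ppoly (Fin N) ⟨0, by omega⟩ ⟨1, by omega⟩ κ (n - i) i =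
      ((2 : ℝ) ^ n)⁻¹ •
        ∑ i ∈ Finset.range (n + 1),
          (∑ j ∈ Finset.range (n + 1), (n.choose j : ℝ) * c j * kraw n i (j : ℝ)) •
            qpoly (Fin N) ⟨0, by omega⟩ ⟨1, by omega⟩ κ (n - i) i := by
  set x1 : Fin N := ⟨0, by omega⟩
  set x2 : Fin N := ⟨1, by omega⟩
  set P : ℕ → ℕ → MvPolynomial (Fin N) ℝ := ppoly (Fin N) x1 x2 κ with hP
  -- RHS rewrite: qpoly as a sum of P k (n-k)
  have hq : ∀ i ∈ Finset.range (n+1), qpoly (Fin N) x1 x2 κ (n-i) i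
      = ∑ k ∈ Finset.range (n+1),
          (∑ a ∈ Finset.range ((n-i)+1),
            (k.choose a : ℝ) * ((n-k).choose ((n-i)-a)) * (-1:ℝ)^((n-k)-((n-i)-a))) • P k (n-k) := by
    intro i hi
    simp only [Finset.mem_range] at hi
    rw [qpoly, show n - i + i = n by omega]
  rw [Finset.sum_congr rfl fun i hi =>
    congrArg (fun p => (∑ j ∈ Finset.range (n + 1), (n.choose j : ℝ) * c j * kraw n i (j : ℝ)) • p)
      (hq i hi)]
  -- push scalars inside and swap sums
  rw [Finset.smul_sum]
  simp only [Finset.smul_sum, smul_smul]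
  rw [Finset.sum_comm]
  -- LHS reindex
  rw [show ∑ i ∈ Finset.range (n + 1), c i • P (n-i) i
      = ∑ k ∈ Finset.range (n + 1), c (n-k) • P k (n-k) from ?_]
  · refine Finset.sum_congr rfl fun k hk => ?_
    simp only [Finset.mem_range] at hk
    rw [← Finset.sum_smul]
    refine congrArg (fun r : ℝ => r • P k (n-k)) ?_
    rw [← Finset.mul_sum]
    exact (PQAux.scalar_key n k (by omega) c).symm
  · rw [← Finset.sum_range_reflect]
    refine Finset.sum_congr rfl fun i hi => ?_
    simp only [Finset.mem_range] at hi
    rw [show n + 1 - 1 - i = n - i by omega, show n - (n - i) = i by omega]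
end
end

section
/- Suppose n is even, 1 ≤ i ≤ n/2, and κ = −(n−2i+1)/2. Then there exist rational numbers c_0,…,c_{n−2i} such that ω_{n−i,i} = Σ_{j=0}^{n−2i} c_j q_{n−j,j} (all polynomials taken with κ specialized to −(n−2i+1)/2). Explicitly, ω_{n−i,i} = Σ_{j=0}^n [(i−j+1)_{n−2i}/(n−2i)!] p_{n−j,j} and the coefficient of q_{n−l,l} in its q-expansion vanishes for l > n−2i. -/
open MvPolynomial

noncomputable section

namespace OQE
open Finset Nat


lemma poch_cast_nat (m k : ℕ) : poch (m : ℝ) k = (m.ascFactorial k : ℝ) := by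
  rw [poch, ← ascPochhammer_eval_cast, ascPochhammer_nat_eq_ascFactorial]

lemma poch_rat_cast (x : ℚ) (k : ℕ) :
    (((ascPochhammer ℚ k).eval x : ℚ) : ℝ) = poch (x : ℝ) k := by
  rw [poch]
  have h := ascPochhammer_map (algebraMap ℚ ℝ) k
  have hx : (algebraMap ℚ ℝ) x = (x : ℝ) := by norm_cast
  rw [← h, Polynomial.eval_map, ← hx, Polynomial.eval₂_at_apply]
  norm_cast

-- finite difference machinery
open fwdDiff in
lemma fwdDiff_poly_eval (Q : Polynomial ℚ) :
    Δ_[(1:ℚ)] (fun t => Q.eval t) = fun t => (Q.comp (Polynomial.X + 1) - Q).eval t := by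
  funext y
  simp [fwdDiff, Polynomial.eval_comp]

lemma natDegree_comp_sub_lt (Q : Polynomial ℚ) (hQ : 1 ≤ Q.natDegree) :
    (Q.comp (Polynomial.X + 1) - Q).natDegree < Q.natDegree := by
  have hQ0 : Q ≠ 0 := fun h => by simp [h] at hQ
  have hX : (Polynomial.X + 1 : Polynomial ℚ).natDegree = 1 := by
    simpa using Polynomial.natDegree_X_add_C (1 : ℚ)
  have hnd : (Q.comp (Polynomial.X + 1)).natDegree = Q.natDegree := by
    rw [Polynomial.natDegree_comp, hX, mul_one]
  have hlc : (Q.comp (Polynomial.X + 1)).leadingCoeff = Q.leadingCoeff := by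
    rw [Polynomial.leadingCoeff_comp (by rw [hX]; exact one_ne_zero)]
    have h1 : (Polynomial.X + 1 : Polynomial ℚ).leadingCoeff = 1 := by
      simpa using (Polynomial.monic_X_add_C (1:ℚ)).leadingCoeff
    simp [h1]
  have hc0 : Q.comp (Polynomial.X + 1) ≠ 0 := by
    intro h
    rw [h] at hlc
    simp only [Polynomial.leadingCoeff_zero] at hlc
    exact hQ0 (Polynomial.leadingCoeff_eq_zero.mp hlc.symm)
  have hdeg : (Q.comp (Polynomial.X + 1)).degree = Q.degree := by
    rw [Polynomial.degree_eq_natDegree hc0, Polynomial.degree_eq_natDegree hQ0, hnd]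
  by_cases hR : Q.comp (Polynomial.X + 1) - Q = 0
  · rw [hR]; simpa using (show 0 < Q.natDegree by omega)
  · have h2 := Polynomial.degree_sub_lt hdeg hc0 hlc
    rw [hdeg] at h2
    exact Polynomial.natDegree_lt_natDegree hR h2

open fwdDiff in
lemma fwdDiff_iter_poly_zero : ∀ (j : ℕ) (Q : Polynomial ℚ), Q.natDegree < j →
    (Δ_[(1:ℚ)])^[j] (fun t => Q.eval t) = fun _ => 0 := by
  intro j
  induction j with
  | zero => intro Q h; omega
  | succ j ih =>
    intro Q hQ
    rw [Function.iterate_succ_apply, fwdDiff_poly_eval]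
    rcases Nat.eq_zero_or_pos j with hj | hj
    · subst hj
      have : Q.natDegree = 0 := by omega
      obtain ⟨c, rfl⟩ := Polynomial.natDegree_eq_zero.mp this
      simp
    · by_cases h0 : Q.natDegree = 0
      · obtain ⟨c, rfl⟩ := Polynomial.natDegree_eq_zero.mp h0
        have : (Polynomial.C c).comp (Polynomial.X + 1) - Polynomial.C c = 0 := by simp
        rw [this]
        have : ((fun t => (0 : Polynomial ℚ).eval t) : ℚ → ℚ) = fun _ => 0 := by simp
        rw [this]
        clear ih hQ h0 hj
        induction j with
        | zero => simp
        | succ j ih2 => rw [Function.iterate_succ_apply, show Δ_[(1:ℚ)] (fun _ => (0:ℚ)) = fun _ => 0 by funext y; simp [fwdDiff], ih2]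
      · exact ih _ (lt_of_lt_of_le (natDegree_comp_sub_lt Q (by omega)) (by omega))

open fwdDiff in
lemma findiff_sum_zero (j : ℕ) (Q : Polynomial ℚ) (hQ : Q.natDegree < j) (y : ℚ) :
    ∑ b ∈ range (j+1), (-1:ℚ)^(j-b) * (j.choose b : ℚ) * Q.eval (y + b) = 0 := by
  have h := fwdDiff_iter_eq_sum_shift (1:ℚ) (fun t => Q.eval t) j y
  rw [fwdDiff_iter_poly_zero j Q hQ] at h
  have h2 : ∀ b : ℕ, ((-1:ℤ)^(j-b) * (j.choose b : ℤ)) • Q.eval (y + b • (1:ℚ))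
      = (-1:ℚ)^(j-b) * (j.choose b : ℚ) * Q.eval (y + b) := by
    intro b
    rw [zsmul_eq_mul, nsmul_eq_mul, mul_one]
    push_cast
    ring
  calc ∑ b ∈ range (j+1), (-1:ℚ)^(j-b) * (j.choose b : ℚ) * Q.eval (y + b)
      = ∑ b ∈ range (j+1), ((-1:ℤ)^(j-b) * (j.choose b : ℤ)) • Q.eval (y + b • (1:ℚ)) :=
        Finset.sum_congr rfl (fun b _ => (h2 b).symm)
    _ = 0 := h.symm



/-- exponent vector for `U^(n-k) V^k` -/
def ee (n k : ℕ) : Fin 2 →₀ ℕ := Finsupp.single 0 (n - k) + Finsupp.single 1 k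

/-- `(U+V)^(n-j) (U-V)^j` -/
def Phi (n j : ℕ) : MvPolynomial (Fin 2) ℚ := (X 0 + X 1) ^ (n - j) * (X 0 - X 1) ^ j

/-- matrix entries -/
def mq (n k j : ℕ) : ℚ := MvPolynomial.coeff (ee n k) (Phi n j)

lemma finsupp_eq (m : Fin 2 →₀ ℕ) :
    m = Finsupp.single 0 (m 0) + Finsupp.single 1 (m 1) := by
  ext x
  fin_cases x <;> simp [Finsupp.single_apply]

lemma single_pair_eq {a b c d : ℕ} :
    (Finsupp.single (0 : Fin 2) a + Finsupp.single 1 b =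
      Finsupp.single 0 c + Finsupp.single 1 d) ↔ (a = c ∧ b = d) := by
  constructor
  · intro h
    constructor
    · have := DFunLike.congr_fun h 0
      simpa [Finsupp.single_apply] using this
    · have := DFunLike.congr_fun h 1
      simpa [Finsupp.single_apply] using this
  · rintro ⟨rfl, rfl⟩; rfl

lemma deg2 (m : Fin 2 →₀ ℕ) : m.degree = m 0 + m 1 := by
  rw [Finsupp.degree_apply]
  rw [Finset.sum_subset (Finset.subset_univ _)
    (by intro x _ hx; simpa using Finsupp.notMem_support_iff.mp hx)]
  exact Fin.sum_univ_two _

lemma coeff_X0X1 (a b c d : ℕ) :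
    MvPolynomial.coeff (Finsupp.single 0 a + Finsupp.single 1 b)
      ((X 0 : MvPolynomial (Fin 2) ℚ) ^ c * X 1 ^ d) = if c = a ∧ d = b then 1 else 0 := by
  rw [X_pow_eq_monomial, X_pow_eq_monomial, monomial_mul, coeff_monomial]
  simp only [mul_one]
  by_cases h : c = a ∧ d = b
  · rw [if_pos (single_pair_eq.mpr ⟨h.1, h.2⟩), if_pos h]
  · rw [if_neg (fun hh => h (single_pair_eq.mp hh)), if_neg h]

lemma isHomogPhi (n j : ℕ) (h : j ≤ n) : (Phi n j).IsHomogeneous n := by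
  have h1 : ((X 0 + X 1 : MvPolynomial (Fin 2) ℚ)).IsHomogeneous 1 :=
    (isHomogeneous_X _ _).add (isHomogeneous_X _ _)
  have h2 : ((X 0 - X 1 : MvPolynomial (Fin 2) ℚ)).IsHomogeneous 1 :=
    (isHomogeneous_X _ _).sub (isHomogeneous_X _ _)
  have h3 := (h1.pow (n - j)).mul (h2.pow j)
  rw [show 1 * (n - j) + 1 * j = n by omega] at h3
  exact h3

lemma coeff_X0X1' (m : Fin 2 →₀ ℕ) (c d : ℕ) :
    MvPolynomial.coeff m ((X 0 : MvPolynomial (Fin 2) ℚ) ^ c * X 1 ^ d)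
      = if c = m 0 ∧ d = m 1 then 1 else 0 := by
  conv_lhs => rw [finsupp_eq m]
  exact coeff_X0X1 (m 0) (m 1) c d

lemma K1 (n l : ℕ) (hl : l ≤ n) :
    Phi n l = ∑ j ∈ range (n + 1),
      (mq n j l) • ((X 0 : MvPolynomial (Fin 2) ℚ) ^ (n - j) * X 1 ^ j) := by
  apply MvPolynomial.ext
  intro m
  rw [MvPolynomial.coeff_sum]
  simp only [MvPolynomial.coeff_smul, smul_eq_mul]
  by_cases hm : m.degree = n
  · have hm01 : m 0 + m 1 = n := by rw [← deg2]; exact hm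
    have hm1 : m 1 ≤ n := by omega
    have hmee : m = ee n (m 1) := by
      rw [ee, show n - m 1 = m 0 by omega]
      exact finsupp_eq m
    rw [Finset.sum_eq_single (m 1)]
    · rw [coeff_X0X1', if_pos ⟨by omega, rfl⟩, mul_one, mq]
      rw [← hmee]
    · intro j hj hne
      rw [coeff_X0X1', if_neg (fun hh => hne hh.2), mul_zero]
    · intro hmem
      exact absurd (Finset.mem_range.mpr (by omega)) hmem
  · rw [(isHomogPhi n l hl).coeff_eq_zero hm]
    apply (Finset.sum_eq_zero _).symm
    intro j hj
    have hj' : j ≤ n := by have := Finset.mem_range.mp hj; omega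
    rw [coeff_X0X1', if_neg, mul_zero]
    rintro ⟨h1, h2⟩
    apply hm
    rw [deg2]
    omega

lemma A1 (n k l : ℕ) (hk : k ≤ n) (hl : l ≤ n) :
    ∑ j ∈ range (n + 1), mq n k j * mq n j l = if k = l then (2:ℚ)^n else 0 := by
  set sub : MvPolynomial (Fin 2) ℚ →ₐ[ℚ] MvPolynomial (Fin 2) ℚ :=
    aeval ![X 0 + X 1, X 0 - X 1] with hsub
  have hsub0 : sub (X 0) = X 0 + X 1 := by simp [hsub]
  have hsub1 : sub (X 1) = X 0 - X 1 := by simp [hsub]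
  have hbasis : ∀ a b : ℕ, sub ((X 0 : MvPolynomial (Fin 2) ℚ) ^ a * X 1 ^ b)
      = (X 0 + X 1) ^ a * (X 0 - X 1) ^ b := by
    intro a b
    rw [map_mul, map_pow, map_pow, hsub0, hsub1]
  have h1 : sub (Phi n l) = (2:ℚ)^n • ((X 0 : MvPolynomial (Fin 2) ℚ) ^ (n - l) * X 1 ^ l) := by
    rw [Phi, map_mul, map_pow, map_pow, map_add, map_sub, hsub0, hsub1]
    rw [show ((X 0 + X 1) + (X 0 - X 1) : MvPolynomial (Fin 2) ℚ) = 2 * X 0 by ring,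
        show ((X 0 + X 1) - (X 0 - X 1) : MvPolynomial (Fin 2) ℚ) = 2 * X 1 by ring]
    rw [mul_pow, mul_pow, smul_eq_C_mul]
    rw [show ((2:ℚ)^n) = ((2:ℚ)^(n-l) * 2^l) by rw [← pow_add, Nat.sub_add_cancel hl]]
    have hC2 : (C (2:ℚ) : MvPolynomial (Fin 2) ℚ) = 2 := map_ofNat C 2
    rw [map_mul, map_pow, map_pow, hC2]
    ring
  have h2 : sub (Phi n l) = ∑ j ∈ range (n + 1), mq n j l • Phi n j := by
    conv_lhs => rw [K1 n l hl]
    rw [map_sum]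
    apply Finset.sum_congr rfl
    intro j _
    rw [map_smul, hbasis]
    rfl
  have h3 := congrArg (MvPolynomial.coeff (ee n k)) (h2.symm.trans h1)
  rw [MvPolynomial.coeff_sum] at h3
  simp only [MvPolynomial.coeff_smul, smul_eq_mul] at h3
  rw [ee, coeff_X0X1] at h3
  calc ∑ j ∈ range (n + 1), mq n k j * mq n j l
      = ∑ j ∈ range (n + 1), mq n j l * MvPolynomial.coeff (ee n k) (Phi n j) := by
        apply Finset.sum_congr rfl; intro j _; rw [mq]; ring
    _ = (2:ℚ)^n * (if n - l = n - k ∧ l = k then 1 else 0) := h3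
    _ = if k = l then (2:ℚ)^n else 0 := by
        by_cases h : k = l
        · rw [if_pos (show n - l = n - k ∧ l = k by omega), if_pos h, mul_one]
        · rw [if_neg (show ¬(n - l = n - k ∧ l = k) by omega), if_neg h, mul_zero]

lemma term_smul (t s pt qs : ℕ) (cp cq : ℕ) :
    ((X 0 : MvPolynomial (Fin 2) ℚ) ^ t * X 1 ^ pt * (cp : MvPolynomial (Fin 2) ℚ)) *
      (X 0 ^ s * (-X 1) ^ qs * (cq : MvPolynomial (Fin 2) ℚ))
    = ((cp * cq * (-1)^qs : ℚ)) • ((X 0 : MvPolynomial (Fin 2) ℚ) ^ (t + s) * X 1 ^ (pt + qs)) := by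
  rw [smul_eq_C_mul, neg_pow]
  rw [map_mul, map_mul]
  rw [show (C ((-1:ℚ)^qs) : MvPolynomial (Fin 2) ℚ) = (-1)^qs by rw [map_pow, map_neg, map_one]]
  rw [show (C (cp:ℚ) : MvPolynomial (Fin 2) ℚ) = (cp : MvPolynomial (Fin 2) ℚ) by push_cast; rfl]
  rw [show (C (cq:ℚ) : MvPolynomial (Fin 2) ℚ) = (cq : MvPolynomial (Fin 2) ℚ) by push_cast; rfl]
  ring

lemma K0 (p q a b : ℕ) (h : a + b = p + q) :
    MvPolynomial.coeff (Finsupp.single 0 a + Finsupp.single 1 b)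
      (((X 0 + X 1 : MvPolynomial (Fin 2) ℚ)) ^ p * (X 0 - X 1) ^ q)
    = ∑ t ∈ range (a + 1),
        (p.choose t : ℚ) * (q.choose (a - t) : ℚ) * (-1 : ℚ) ^ (q - (a - t)) := by
  rw [add_pow, sub_eq_add_neg, add_pow, Finset.sum_mul_sum]
  rw [MvPolynomial.coeff_sum]
  have hterm : ∀ t ∈ range (p+1), ∀ s ∈ range (q+1),
      MvPolynomial.coeff (Finsupp.single 0 a + Finsupp.single 1 b)
        ((X 0 ^ t * X 1 ^ (p - t) * (p.choose t : MvPolynomial (Fin 2) ℚ)) *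
         (X 0 ^ s * (-X 1) ^ (q - s) * (q.choose s : MvPolynomial (Fin 2) ℚ)))
      = if s = a - t ∧ t ≤ a then (p.choose t : ℚ) * (q.choose s : ℚ) * (-1:ℚ)^(q - s) else 0 := by
    intro t ht s hs
    rw [term_smul, MvPolynomial.coeff_smul, smul_eq_mul, coeff_X0X1]
    have hip : t ≤ p := by have := Finset.mem_range.mp ht; omega
    have hiq : s ≤ q := by have := Finset.mem_range.mp hs; omega
    by_cases hc : t + s = a ∧ (p - t) + (q - s) = b
    · rw [if_pos hc, mul_one, if_pos (by omega)]
    · rw [if_neg hc, mul_zero, if_neg (by omega)]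
  rw [Finset.sum_congr rfl (fun t ht => MvPolynomial.coeff_sum _ _ _)]
  rw [Finset.sum_congr rfl (fun t ht => Finset.sum_congr rfl (fun s hs => hterm t ht s hs))]
  -- collapse inner sum
  have hinner : ∀ t ∈ range (p+1),
      (∑ s ∈ range (q+1), if s = a - t ∧ t ≤ a
          then (p.choose t : ℚ) * (q.choose s : ℚ) * (-1:ℚ)^(q - s) else 0)
      = if t ≤ a ∧ a - t ≤ q
          then (p.choose t : ℚ) * (q.choose (a-t) : ℚ) * (-1:ℚ)^(q - (a-t)) else 0 := by
    intro t _
    by_cases hta : t ≤ a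
    · simp only [hta, and_true, true_and]
      rw [Finset.sum_ite_eq' (range (q+1)) (a - t)
        (fun s => (p.choose t : ℚ) * (q.choose s : ℚ) * (-1:ℚ)^(q - s))]
      by_cases hq : a - t ≤ q
      · rw [if_pos (Finset.mem_range.mpr (by omega)), if_pos hq]
      · rw [if_neg (fun hh => hq (by have := Finset.mem_range.mp hh; omega)), if_neg hq]
    · simp only [hta, and_false, false_and, if_false, Finset.sum_const_zero]
  rw [Finset.sum_congr rfl hinner]
  -- now compare ranges
  set g : ℕ → ℚ := fun t => (p.choose t : ℚ) * (q.choose (a-t) : ℚ) * (-1:ℚ)^(q - (a-t)) with hg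
  have hL : (∑ t ∈ range (p+1), if t ≤ a ∧ a - t ≤ q then g t else 0)
      = ∑ t ∈ range (p+a+1), if t ≤ a ∧ a - t ≤ q then g t else 0 := by
    apply Finset.sum_subset
    · exact Finset.range_subset_range.mpr (by omega)
    · intro t _ ht
      have htp : p < t := by have := Finset.mem_range.not.mp ht; omega
      split
      · rw [hg]; simp [Nat.choose_eq_zero_of_lt htp]
      · rfl
  have hR : (∑ t ∈ range (a+1), g t)
      = ∑ t ∈ range (p+a+1), if t ≤ a ∧ a - t ≤ q then g t else 0 := by
    rw [Finset.sum_congr rfl (g := fun t => if t ≤ a ∧ a - t ≤ q then g t else 0) (fun t ht => ?_)]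
    · apply Finset.sum_subset
      · exact Finset.range_subset_range.mpr (by omega)
      · intro t _ ht
        rw [if_neg]
        intro hh
        exact absurd (Finset.mem_range.mpr (by omega)) ht
    · have hta : t ≤ a := by have := Finset.mem_range.mp ht; omega
      show g t = if t ≤ a ∧ a - t ≤ q then g t else 0
      by_cases hq : a - t ≤ q
      · rw [if_pos ⟨hta, hq⟩]
      · rw [if_neg (fun hh => hq hh.2), hg]
        simp [Nat.choose_eq_zero_of_lt (show q < a - t by omega)]
  rw [hL, ← hR]


lemma term_smul2 (t s b jb : ℕ) (c : ℕ) :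
    ((X 0 : MvPolynomial (Fin 2) ℚ) ^ t * X 1 ^ s) * (X 0 ^ b * (-X 1) ^ jb * (c : MvPolynomial (Fin 2) ℚ))
    = ((c * (-1)^jb : ℚ)) • ((X 0 : MvPolynomial (Fin 2) ℚ) ^ (t + b) * X 1 ^ (s + jb)) := by
  rw [smul_eq_C_mul, neg_pow, map_mul]
  rw [show (C ((-1:ℚ)^jb) : MvPolynomial (Fin 2) ℚ) = (-1)^jb by rw [map_pow, map_neg, map_one]]
  rw [show (C (c:ℚ) : MvPolynomial (Fin 2) ℚ) = (c : MvPolynomial (Fin 2) ℚ) by rfl]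
  ring

lemma Bvanish (n d j : ℕ) (α : ℚ) (hdj : d < j) (hjn : j ≤ n) :
    ∑ k ∈ range (n+1), (ascPochhammer ℚ d).eval (α - k) * mq n k j = 0 := by
  have key : ∀ t, t ≤ n - j → ∑ k ∈ range (n+1), (ascPochhammer ℚ d).eval (α - k) *
      MvPolynomial.coeff (ee n k) ((X 0 ^ t * X 1 ^ ((n-j)-t)) * (X 0 - X 1)^j) = 0 := by
    intro t htn
    have hexp : ((X 0 : MvPolynomial (Fin 2) ℚ) ^ t * X 1 ^ ((n-j)-t)) * (X 0 - X 1)^j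
        = ∑ b ∈ range (j+1), ((j.choose b : ℚ) * (-1)^(j-b)) •
            ((X 0 : MvPolynomial (Fin 2) ℚ) ^ (t+b) * X 1 ^ (((n-j)-t)+(j-b))) := by
      rw [sub_eq_add_neg, add_pow, Finset.mul_sum]
      exact Finset.sum_congr rfl (fun b _ => term_smul2 t ((n-j)-t) b (j-b) (j.choose b))
    have hco : ∀ k, MvPolynomial.coeff (ee n k) ((X 0 ^ t * X 1 ^ ((n-j)-t)) * (X 0 - X 1)^j)
        = ∑ b ∈ range (j+1), ((j.choose b : ℚ) * (-1)^(j-b)) *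
            (if t + b = n - k ∧ ((n-j)-t)+(j-b) = k then 1 else 0) := by
      intro k
      rw [hexp, MvPolynomial.coeff_sum]
      apply Finset.sum_congr rfl
      intro b _
      rw [MvPolynomial.coeff_smul, smul_eq_mul, ee, coeff_X0X1]
    rw [Finset.sum_congr rfl (fun k _ => by rw [hco k])]
    rw [Finset.sum_congr rfl (fun k _ => Finset.mul_sum _ _ _)]
    rw [Finset.sum_comm]
    have hswap : ∀ b, b ≤ j → ∑ k ∈ range (n+1), (ascPochhammer ℚ d).eval (α - k) *
        (((j.choose b : ℚ) * (-1)^(j-b)) * (if t + b = n - k ∧ ((n-j)-t)+(j-b) = k then 1 else 0))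
        = (-1:ℚ)^(j-b) * (j.choose b : ℚ) * (ascPochhammer ℚ d).eval ((α - n + t) + b) := by
      intro b hb
      rw [Finset.sum_eq_single (n - t - b)]
      · rw [if_pos (by omega), mul_one,
          show ((α : ℚ) - ((n - t - b : ℕ) : ℚ)) = (α - n + t) + b by
            have h1 : ((n - t - b : ℕ) : ℚ) = (n:ℚ) - (t:ℚ) - (b:ℚ) := by
              rw [Nat.cast_sub (show b ≤ n - t by omega), Nat.cast_sub (show t ≤ n by omega)]
            rw [h1]; ring]
        ring
      · intro k hk hne
        rw [if_neg (by omega), mul_zero, mul_zero]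
      · intro hmem
        exact absurd (Finset.mem_range.mpr (by omega)) hmem
    rw [Finset.sum_congr rfl (fun b hb => hswap b (by have := Finset.mem_range.mp hb; omega))]
    have := findiff_sum_zero j (ascPochhammer ℚ d)
      (by rw [ascPochhammer_natDegree]; exact hdj) (α - n + t)
    exact this
  -- main reduction
  have hPhiexp : ∀ k, mq n k j = ∑ t ∈ range ((n-j)+1), ((n-j).choose t : ℚ) *
      MvPolynomial.coeff (ee n k) ((X 0 ^ t * X 1 ^ ((n-j)-t)) * (X 0 - X 1)^j) := by
    intro k
    rw [mq, Phi, add_pow, Finset.sum_mul, MvPolynomial.coeff_sum]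
    apply Finset.sum_congr rfl
    intro s _
    rw [show ((X 0 : MvPolynomial (Fin 2) ℚ) ^ s * X 1 ^ ((n-j) - s) * ((n-j).choose s : MvPolynomial (Fin 2) ℚ)) * (X 0 - X 1)^j
        = (((n-j).choose s : ℚ)) • ((X 0 ^ s * X 1 ^ ((n-j)-s)) * (X 0 - X 1)^j) by
          rw [smul_eq_C_mul, show (C (((n-j).choose s : ℕ):ℚ) : MvPolynomial (Fin 2) ℚ)
            = (((n-j).choose s : ℕ) : MvPolynomial (Fin 2) ℚ) by rfl]
          ring]
    rw [MvPolynomial.coeff_smul, smul_eq_mul]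
  rw [Finset.sum_congr rfl (fun k _ => by rw [hPhiexp k])]
  rw [Finset.sum_congr rfl (fun k _ => Finset.mul_sum _ _ _)]
  rw [Finset.sum_comm]
  apply Finset.sum_eq_zero
  intro t ht
  have htn : t ≤ n - j := by have := Finset.mem_range.mp ht; omega
  calc ∑ k ∈ range (n+1), (ascPochhammer ℚ d).eval (α - k) * (((n-j).choose t : ℚ) *
        MvPolynomial.coeff (ee n k) ((X 0 ^ t * X 1 ^ ((n-j)-t)) * (X 0 - X 1)^j))
      = ((n-j).choose t : ℚ) * ∑ k ∈ range (n+1), (ascPochhammer ℚ d).eval (α - k) *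
        MvPolynomial.coeff (ee n k) ((X 0 ^ t * X 1 ^ ((n-j)-t)) * (X 0 - X 1)^j) := by
        rw [Finset.mul_sum]
        exact Finset.sum_congr rfl (fun k _ => by ring)
    _ = 0 := by rw [key t htn, mul_zero]

lemma factorial_cast_ne (m : ℕ) : ((Nat.factorial m : ℕ) : ℝ) ≠ 0 := by
  exact_mod_cast (Nat.factorial_pos m).ne'

lemma hid1' (d j' : ℕ) :
    poch ((d:ℝ) + 1) j' * ((d:ℝ) + (j':ℝ) + 1) / ((Nat.factorial (j'+1) : ℕ) : ℝ)
      = poch (((j'+2 : ℕ) : ℝ)) d / ((Nat.factorial d : ℕ) : ℝ) := by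
  rw [show ((d:ℝ)+1) = ((d+1:ℕ):ℝ) by push_cast; ring, poch_cast_nat, poch_cast_nat]
  rw [div_eq_div_iff (factorial_cast_ne (j'+1)) (factorial_cast_ne d)]
  have hnat : (d+1).ascFactorial j' * (d+j'+1) * d ! = (j'+2).ascFactorial d * (j'+1)! := by
    have h1 := Nat.factorial_mul_ascFactorial d j'
    have h2 := Nat.factorial_mul_ascFactorial (j'+1) d
    calc (d+1).ascFactorial j' * (d+j'+1) * d !
        = (d ! * (d+1).ascFactorial j') * (d+j'+1) := by ring
      _ = (d+j')! * (d+j'+1) := by rw [h1]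
      _ = (d+j'+1)! := by rw [Nat.factorial_succ]; ring
      _ = (j'+1+d)! := by rw [show d+j'+1 = j'+1+d by ring]
      _ = (j'+1)! * (j'+2).ascFactorial d := by rw [h2]
      _ = (j'+2).ascFactorial d * (j'+1)! := by ring
  exact_mod_cast hnat

lemma hid2' (d j' : ℕ) (hdeven : Even d) :
    poch ((d:ℝ)+1) j' * ((j':ℝ)+1) / ((Nat.factorial (j'+1) : ℕ) : ℝ)
      = poch (-(((d+j' : ℕ)):ℝ)) d / ((Nat.factorial d : ℕ) : ℝ) := by
  rw [show poch (-(((d+j' : ℕ)):ℝ)) d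
      = (((d+j').descFactorial d : ℕ) : ℝ) by
    rw [poch, ascPochhammer_eval_neg_eq_descPochhammer, hdeven.neg_one_pow, one_mul,
      descPochhammer_eval_eq_descFactorial]]
  rw [show ((d:ℝ)+1) = ((d+1:ℕ):ℝ) by push_cast; ring, poch_cast_nat]
  rw [div_eq_div_iff (factorial_cast_ne (j'+1)) (factorial_cast_ne d)]
  have hnat : (d+1).ascFactorial j' * (j'+1) * d ! = (d+j').descFactorial d * (j'+1)! := by
    have h1 := Nat.factorial_mul_ascFactorial d j'
    have h3 := Nat.factorial_mul_descFactorial (show d ≤ d + j' by omega)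
    rw [show d + j' - d = j' by omega] at h3
    calc (d+1).ascFactorial j' * (j'+1) * d !
        = (d ! * (d+1).ascFactorial j') * (j'+1) := by ring
      _ = (d+j')! * (j'+1) := by rw [h1]
      _ = (j' ! * (d+j').descFactorial d) * (j'+1) := by rw [h3]
      _ = (d+j').descFactorial d * ((j'+1) * j' !) := by ring
      _ = (d+j').descFactorial d * (j'+1)! := by rw [Nat.factorial_succ]
  exact_mod_cast hnat

lemma part1_abstract {M : Type*} [AddCommMonoid M] [Module ℝ M] (F : ℕ → ℕ → M)
    (n i d : ℕ) (hn : n = 2 * i + d) (hi1 : 1 ≤ i) (hdeven : Even d) :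
    F (n-i) i + ∑ j ∈ Finset.Icc 1 i, (poch ((d:ℝ)+1) (j-1) / ((Nat.factorial j : ℕ) : ℝ)) •
        ((((d:ℝ)) + (j:ℝ)) • F (n-i+j) (i-j) + (j:ℝ) • F (i-j) (n-i+j))
    = ∑ j ∈ Finset.range (n+1),
        (poch ((i : ℝ) - (j:ℝ) + 1) d / ((Nat.factorial d : ℕ) : ℝ)) • F (n-j) j := by
  set c' : ℕ → ℝ := fun k => poch ((i : ℝ) - (k:ℝ) + 1) d / ((Nat.factorial d : ℕ) : ℝ) with hc'
  -- split RHS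
  rw [Finset.range_eq_Ico,
    ← Finset.sum_Ico_consecutive (fun j => c' j • F (n-j) j)
      (show 0 ≤ i+1 by omega) (show i+1 ≤ n+1 by omega),
    ← Finset.sum_Ico_consecutive (fun j => c' j • F (n-j) j)
      (show i+1 ≤ n-i+1 by omega) (show n-i+1 ≤ n+1 by omega)]
  have hmid : ∑ j ∈ Finset.Ico (i+1) (n-i+1), c' j • F (n-j) j = 0 := by
    apply Finset.sum_eq_zero
    intro j hj
    obtain ⟨h1, h2⟩ := Finset.mem_Ico.mp hj
    have harg : (i:ℝ) - (j:ℝ) + 1 = -(((j - i - 1 : ℕ)) : ℝ) := by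
      rw [Nat.cast_sub (show 1 ≤ j - i by omega), Nat.cast_sub (show i ≤ j by omega)]
      push_cast; ring
    rw [hc']
    simp only []
    rw [harg, poch, ascPochhammer_eval_neg_coe_nat_of_lt (show j-i-1 < d by omega),
      zero_div, zero_smul]
  rw [hmid, zero_add]
  have htopsplit : ∑ j ∈ Finset.Ico 0 (i+1), c' j • F (n-j) j
      = (∑ j ∈ Finset.Ico 0 i, c' j • F (n-j) j) + c' i • F (n-i) i :=
    Finset.sum_Ico_succ_top (by omega) _
  have htop : c' i • F (n-i) i = F (n-i) i := by
    rw [hc']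
    simp only []
    rw [show (i:ℝ) - (i:ℝ) + 1 = 1 by ring, poch, ascPochhammer_eval_one,
      div_self (factorial_cast_ne d), one_smul]
  -- termwise identities on the LHS sum
  have hterm : ∀ j ∈ Finset.Icc 1 i,
      (poch ((d:ℝ)+1) (j-1) / ((Nat.factorial j : ℕ) : ℝ)) •
        ((((d:ℝ)) + (j:ℝ)) • F (n-i+j) (i-j) + (j:ℝ) • F (i-j) (n-i+j))
      = c' (i-j) • F (n-i+j) (i-j) + c' (n-i+j) • F (i-j) (n-i+j) := by
    intro j hj
    obtain ⟨hj1, hj2⟩ := Finset.mem_Icc.mp hj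
    obtain ⟨j', rfl⟩ : ∃ j', j = j' + 1 := ⟨j - 1, by omega⟩
    rw [smul_add, smul_smul, smul_smul]
    congr 1
    · congr 1
      rw [hc']
      simp only [Nat.add_sub_cancel]
      rw [show (i:ℝ) - ((i - (j'+1) : ℕ) : ℝ) + 1 = ((j'+2 : ℕ) : ℝ) by
        rw [Nat.cast_sub (by omega)]; push_cast; ring]
      rw [div_mul_eq_mul_div]
      rw [show poch ((d:ℝ)+1) j' * ((d:ℝ) + ((j'+1 : ℕ):ℝ)) = poch ((d:ℝ)+1) j' * ((d:ℝ) + (j':ℝ) + 1) by push_cast; ring]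
      exact hid1' d j'
    · congr 1
      rw [hc']
      simp only [Nat.add_sub_cancel]
      rw [show (i:ℝ) - ((n - i + (j'+1) : ℕ) : ℝ) + 1 = -(((d+j' : ℕ)):ℝ) by
        rw [show n - i + (j'+1) = i + d + (j'+1) by omega]; push_cast; ring]
      rw [div_mul_eq_mul_div]
      rw [show ((j'+1 : ℕ) : ℝ) = ((j':ℝ)+1) by push_cast; ring]
      exact hid2' d j' hdeven
  rw [Finset.sum_congr rfl hterm, Finset.sum_add_distrib]
  -- reindex first family
  have hre1 : ∑ j ∈ Finset.Icc 1 i, c' (i-j) • F (n-i+j) (i-j)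
      = ∑ j ∈ Finset.Ico 0 i, c' j • F (n-j) j := by
    apply Finset.sum_bij' (fun j _ => i - j) (fun j _ => i - j)
    · intro a ha
      obtain ⟨h1, h2⟩ := Finset.mem_Icc.mp ha
      exact Finset.mem_Ico.mpr (by omega)
    · intro a ha
      have h2 := (Finset.mem_Ico.mp ha).2
      exact Finset.mem_Icc.mpr (by omega)
    · intro a ha
      obtain ⟨h1, h2⟩ := Finset.mem_Icc.mp ha
      omega
    · intro a ha
      have h2 := (Finset.mem_Ico.mp ha).2
      omega
    · intro a ha
      obtain ⟨h1, h2⟩ := Finset.mem_Icc.mp ha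
      rw [show n - (i - a) = n - i + a by omega]
  -- reindex second family
  have hre2 : ∑ j ∈ Finset.Icc 1 i, c' (n-i+j) • F (i-j) (n-i+j)
      = ∑ j ∈ Finset.Ico (n-i+1) (n+1), c' j • F (n-j) j := by
    apply Finset.sum_bij' (fun j _ => n - i + j) (fun j _ => j - (n - i))
    · intro a ha
      obtain ⟨h1, h2⟩ := Finset.mem_Icc.mp ha
      exact Finset.mem_Ico.mpr (by omega)
    · intro a ha
      obtain ⟨h1, h2⟩ := Finset.mem_Ico.mp ha
      exact Finset.mem_Icc.mpr (by omega)
    · intro a ha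
      obtain ⟨h1, h2⟩ := Finset.mem_Icc.mp ha
      omega
    · intro a ha
      obtain ⟨h1, h2⟩ := Finset.mem_Ico.mp ha
      omega
    · intro a ha
      obtain ⟨h1, h2⟩ := Finset.mem_Icc.mp ha
      rw [show n - (n - i + a) = i - a by omega]
  rw [hre1, hre2, htopsplit, htop]
  abel


lemma part1 (N : ℕ) (hN : 2 ≤ N) (n i : ℕ) (hne : Even n) (hi1 : 1 ≤ i) (hi2 : 2 * i ≤ n) :
    omegaP (Fin N) ⟨0, by linarith⟩ ⟨1, by linarith⟩ (-((n : ℝ) - 2 * i + 1) / 2) (n - i) i =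
      ∑ j ∈ Finset.range (n + 1),
        (poch ((i : ℝ) - j + 1) (n - 2 * i) / (Nat.factorial (n - 2 * i) : ℝ)) •
          ppoly (Fin N) ⟨0, by linarith⟩ ⟨1, by linarith⟩ (-((n : ℝ) - 2 * i + 1) / 2) (n - j) j := by
  have hin : i ≤ n := by omega
  set d : ℕ := n - 2 * i with hd
  have hn2 : n = 2 * i + d := by omega
  have hdeven : Even d := by
    rcases hne with ⟨r, hr⟩; exact ⟨r - i, by omega⟩
  set κ : ℝ := -((n : ℝ) - 2 * i + 1) / 2 with hκ
  have hdr : (d:ℝ) = (n:ℝ) - 2*i := by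
    rw [hd, Nat.cast_sub hi2]; push_cast; ring
  have hni : ((n - i : ℕ) : ℝ) = (n:ℝ) - i := Nat.cast_sub hin
  have hmain := part1_abstract
    (fun a b => ppoly (Fin N) ⟨0, by omega⟩ ⟨1, by omega⟩ κ a b) n i d hn2 hi1 hdeven
  rw [omegaP, if_pos (show i ≤ n - i by omega), omegaAux]
  rw [← hmain]
  congr 1
  apply Finset.sum_congr rfl
  intro j hj
  have hAne : poch (((d:ℝ)+1)/2) j ≠ 0 :=
    ne_of_gt (ascPochhammer_pos j _ (by positivity))
  have hcoef :
      poch (-κ) j * poch (((n - i : ℕ) : ℝ) - (i:ℝ) + 1) (j - 1) /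
        (poch (κ + ((n - i : ℕ):ℝ) - (i:ℝ) + 1) j * (Nat.factorial j : ℝ))
      = poch ((d:ℝ)+1) (j-1) / (Nat.factorial j : ℝ) := by
    have e2 : -κ = ((d:ℝ)+1)/2 := by rw [hκ, hdr]; ring
    have e3 : κ + ((n - i : ℕ):ℝ) - (i:ℝ) + 1 = ((d:ℝ)+1)/2 := by rw [hni, hκ, hdr]; ring
    have e4 : ((n - i : ℕ):ℝ) - (i:ℝ) + 1 = (d:ℝ)+1 := by rw [hni, hdr]; ring
    rw [e2, e3, e4]
    exact mul_div_mul_left _ _ hAne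
  have harg : ((n - i : ℕ):ℝ) - (i:ℝ) + (j:ℝ) = (d:ℝ) + (j:ℝ) := by rw [hni, hdr]; ring
  rw [hcoef, harg]

end OQE


/-- Let `n` be even, `1 ≤ i ≤ n/2`, `κ = −(n−2i+1)/2`.  Then
`ω_{n−i,i} = ∑_{j=0}^n [(i−j+1)_{n−2i}/(n−2i)!] p_{n−j,j}`, and
`ω_{n−i,i} = ∑_{j=0}^{n−2i} cⱼ q_{n−j,j}` with rational coefficients `cⱼ`
(i.e. the coefficients of `q_{n−l,l}` vanish for `l > n−2i`). -/
theorem omega_q_expansion_even (N : ℕ) (hN : 2 ≤ N) (n i : ℕ) (hne : Even n)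
    (hi1 : 1 ≤ i) (hi2 : 2 * i ≤ n) :
    omegaP (Fin N) ⟨0, by omega⟩ ⟨1, by omega⟩ (-((n : ℝ) - 2 * i + 1) / 2) (n - i) i =
      ∑ j ∈ Finset.range (n + 1),
        (poch ((i : ℝ) - j + 1) (n - 2 * i) / (Nat.factorial (n - 2 * i) : ℝ)) •
          ppoly (Fin N) ⟨0, by omega⟩ ⟨1, by omega⟩ (-((n : ℝ) - 2 * i + 1) / 2) (n - j) j ∧
    ∃ c : ℕ → ℚ, (∀ j : ℕ, n - 2 * i < j → c j = 0) ∧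
      omegaP (Fin N) ⟨0, by omega⟩ ⟨1, by omega⟩ (-((n : ℝ) - 2 * i + 1) / 2) (n - i) i =
        ∑ j ∈ Finset.range (n + 1),
          (c j : ℝ) • qpoly (Fin N) ⟨0, by omega⟩ ⟨1, by omega⟩
            (-((n : ℝ) - 2 * i + 1) / 2) (n - j) j := by
  
  classical
  have hin : i ≤ n := by omega
  constructor
  · exact OQE.part1 N hN n i hne hi1 hi2
  · set cpq : ℕ → ℚ := fun k =>
      (ascPochhammer ℚ (n - 2*i)).eval ((i:ℚ) - k + 1) / (Nat.factorial (n - 2*i) : ℚ) with hcpq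
    refine ⟨fun j => if j ≤ n then
      (∑ k ∈ Finset.range (n+1), cpq k * OQE.mq n k j) / 2^n else 0, ?_, ?_⟩
    · intro j hj
      by_cases hjn : j ≤ n
      · simp only [if_pos hjn]
        have hB := OQE.Bvanish n (n - 2*i) j ((i:ℚ)+1) (by omega) hjn
        have hsum : ∑ k ∈ Finset.range (n+1), cpq k * OQE.mq n k j = 0 := by
          have hterm : ∀ k ∈ Finset.range (n+1), cpq k * OQE.mq n k j
              = ((ascPochhammer ℚ (n-2*i)).eval (((i:ℚ)+1) - k) * OQE.mq n k j)
                  / (Nat.factorial (n-2*i) : ℚ) := by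
            intro k _
            rw [hcpq]
            simp only []
            rw [show (i:ℚ) - k + 1 = ((i:ℚ)+1) - k by ring]
            ring
          rw [Finset.sum_congr rfl hterm, ← Finset.sum_div, hB, zero_div]
        rw [hsum, zero_div]
      · simp only [if_neg hjn]
    · rw [OQE.part1 N hN n i hne hi1 hi2]
      have hq : ∀ j ∈ Finset.range (n+1),
          ((if j ≤ n then (∑ k ∈ Finset.range (n+1), cpq k * OQE.mq n k j) / 2^n else 0 : ℚ) : ℝ) •
            qpoly (Fin N) ⟨0, by omega⟩ ⟨1, by omega⟩ (-((n : ℝ) - 2 * i + 1) / 2) (n - j) j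
          = ∑ i' ∈ Finset.range (n+1),
              (((if j ≤ n then (∑ k ∈ Finset.range (n+1), cpq k * OQE.mq n k j) / 2^n else 0 : ℚ) : ℝ) *
                (∑ a ∈ Finset.range ((n-j) + 1),
                  (i'.choose a : ℝ) * (((n - i').choose ((n-j) - a)) : ℝ) *
                    (-1:ℝ) ^ ((n - i') - ((n-j) - a)))) •
                ppoly (Fin N) ⟨0, by omega⟩ ⟨1, by omega⟩ (-((n : ℝ) - 2 * i + 1) / 2) i' (n - i') := by
        intro j hj
        have hjn : j ≤ n := by have := Finset.mem_range.mp hj; omega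
        rw [qpoly, Nat.sub_add_cancel hjn, Finset.smul_sum]
        apply Finset.sum_congr rfl
        intro i' _
        rw [smul_smul]
      rw [Finset.sum_congr rfl hq, Finset.sum_comm]
      rw [← Finset.sum_range_reflect]
      apply Finset.sum_congr rfl
      intro i' hi'
      have hi'n : i' ≤ n := by have := Finset.mem_range.mp hi'; omega
      simp only [Nat.add_sub_cancel]
      rw [← Finset.sum_smul]
      rw [show n - (n - i') = i' by omega]
      congr 1
      -- scalar identity
      have hw : ∀ j, j ≤ n →
          (∑ a ∈ Finset.range ((n-j) + 1),
            (i'.choose a : ℝ) * (((n - i').choose ((n-j) - a)) : ℝ) *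
              (-1:ℝ) ^ ((n - i') - ((n-j) - a)))
          = ((OQE.mq n j (n - i') : ℚ) : ℝ) := by
        intro j hj
        have hmqval : OQE.mq n j (n - i')
            = ∑ t ∈ Finset.range ((n-j)+1),
                (i'.choose t : ℚ) * (((n - i').choose ((n-j) - t)) : ℚ) *
                  (-1:ℚ) ^ ((n - i') - ((n-j) - t)) := by
          rw [OQE.mq, OQE.Phi, OQE.ee, show n - (n - i') = i' by omega]
          exact OQE.K0 i' (n - i') (n - j) j (by omega)
        rw [hmqval]
        push_cast
        rfl
      have hrw : ∀ j ∈ Finset.range (n+1),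
          ((if j ≤ n then (∑ k ∈ Finset.range (n+1), cpq k * OQE.mq n k j) / 2^n else 0 : ℚ) : ℝ) *
            (∑ a ∈ Finset.range ((n-j) + 1),
              (i'.choose a : ℝ) * (((n - i').choose ((n-j) - a)) : ℝ) *
                (-1:ℝ) ^ ((n - i') - ((n-j) - a)))
          = ((((∑ k ∈ Finset.range (n+1), cpq k * OQE.mq n k j) / 2^n) * OQE.mq n j (n - i') : ℚ) : ℝ) := by
        intro j hj
        have hjn : j ≤ n := by have := Finset.mem_range.mp hj; omega
        rw [hw j hjn, if_pos hjn]
        push_cast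
        ring
      rw [Finset.sum_congr rfl hrw, ← Rat.cast_sum]
      have hQ : ∑ j ∈ Finset.range (n+1),
          ((∑ k ∈ Finset.range (n+1), cpq k * OQE.mq n k j) / 2^n) * OQE.mq n j (n - i')
          = cpq (n - i') := by
        have hstep : ∀ j ∈ Finset.range (n+1),
            ((∑ k ∈ Finset.range (n+1), cpq k * OQE.mq n k j)/2^n) * OQE.mq n j (n - i')
            = ∑ k ∈ Finset.range (n+1), cpq k * (OQE.mq n k j * OQE.mq n j (n - i')) / 2^n := by
          intro j _
          rw [div_mul_eq_mul_div, Finset.sum_mul, Finset.sum_div]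
          exact Finset.sum_congr rfl (fun k _ => by ring)
        rw [Finset.sum_congr rfl hstep, Finset.sum_comm]
        have hstep2 : ∀ k ∈ Finset.range (n+1),
            (∑ j ∈ Finset.range (n+1), cpq k * (OQE.mq n k j * OQE.mq n j (n - i')) / 2^n)
            = cpq k * (if k = n - i' then (2:ℚ)^n else 0) / 2^n := by
          intro k hk
          have hkn : k ≤ n := by have := Finset.mem_range.mp hk; omega
          rw [← Finset.sum_div, ← Finset.mul_sum, OQE.A1 n k (n - i') hkn (by omega)]
        rw [Finset.sum_congr rfl hstep2]
        rw [Finset.sum_eq_single (n - i')]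
        · rw [if_pos rfl]
          have h2 : ((2:ℚ)^n) ≠ 0 := by positivity
          field_simp
        · intro k _ hne
          rw [if_neg hne, mul_zero, zero_div]
        · intro h
          exact absurd (Finset.mem_range.mpr (by omega)) h
      rw [hQ, hcpq]
      simp only []
      rw [Rat.cast_div]
      rw [OQE.poch_rat_cast]
      have harg : (((i:ℚ) - ((n - i' : ℕ):ℚ) + 1 : ℚ) : ℝ) = (i:ℝ) - ((n - i' : ℕ):ℝ) + 1 := by
        push_cast
        ring
      rw [harg]
      norm_cast
end
end

section
/- Let l ∈ ℕ₀ and κ = −l−1/2. Then: (a) A_n(u; −l−1/2) = 0 when n is odd; (b) A_{2j}(u; −l−1/2) = [(−l−1/2)_j / j!] (1−u)^{2l+1−2j} for all j ≥ 0, which for 2j ≤ 2l is a polynomial in u of degree 2l+1−2j; (c) B_n(u; −l−1/2) = [(−l+1/2)_{⌊n/2⌋} / ⌊n/2⌋!] (1−u)^{2l−n} for all n ≥ 0, which for n ≤ 2l is a polynomial in u of degree 2l−n. -/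
open MvPolynomial

noncomputable section

namespace ABaux

def bc (α : ℝ) (k : ℕ) : ℝ := poch α k / (Nat.factorial k : ℝ)

def arr (κ₁ κ₂ : ℝ) (n m : ℕ) : ℝ :=
  ∑ k ∈ Finset.range (m + n + 1),
    (poch κ₁ k / (Nat.factorial k : ℝ)) *
      (poch κ₂ (m + n - k) / (Nat.factorial (m + n - k) : ℝ)) *
      ∑ a ∈ Finset.range (m + 1),
        (k.choose a : ℝ) * ((m + n - k).choose (m - a) : ℝ) *
          (-1 : ℝ) ^ ((m + n - k) - (m - a))

def ahat (κ₁ κ₂ : ℝ) (n m : ℕ) : ℝ :=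
  ∑ p ∈ Finset.HasAntidiagonal.antidiagonal n, ∑ q ∈ Finset.HasAntidiagonal.antidiagonal m,
    (bc κ₁ (q.1 + p.1) * ((q.1 + p.1).choose p.1 : ℝ)) *
    (bc κ₂ (q.2 + p.2) * ((q.2 + p.2).choose p.2 : ℝ)) * (-1 : ℝ) ^ p.2

lemma arr_eq_ahat (κ₁ κ₂ : ℝ) (n m : ℕ) : arr κ₁ κ₂ n m = ahat κ₁ κ₂ n m := by
  rw [ahat, Finset.Nat.sum_antidiagonal_eq_sum_range_succ_mk]
  simp only [Finset.Nat.sum_antidiagonal_eq_sum_range_succ_mk]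
  rw [Finset.sum_comm, arr]
  simp only [Finset.mul_sum]
  rw [Finset.sum_comm]
  refine Finset.sum_congr rfl fun a ha => ?_
  rw [Finset.mem_range] at ha
  have ham : a ≤ m := by omega
  have hsub : Finset.Icc a (a + n) ⊆ Finset.range (m + n + 1) := by
    intro k hk
    rw [Finset.mem_Icc] at hk
    rw [Finset.mem_range]
    omega
  rw [← Finset.sum_subset hsub ?_]
  · refine Finset.sum_nbij' (fun k => k - a) (fun i => a + i) ?_ ?_ ?_ ?_ ?_
    · intro k hk
      rw [Finset.mem_Icc] at hk
      rw [Finset.mem_range]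
      omega
    · intro i hi
      rw [Finset.mem_range] at hi
      rw [Finset.mem_Icc]
      omega
    · intro k hk
      rw [Finset.mem_Icc] at hk
      omega
    · intro i hi
      omega
    · intro k hk
      rw [Finset.mem_Icc] at hk
      obtain ⟨i, rfl⟩ : ∃ i, k = a + i := ⟨k - a, by omega⟩
      have hin : i ≤ n := by omega
      rw [show a + i - a = i by omega]
      have h1 : m + n - (a + i) = (m - a) + (n - i) := by omega
      have h2 : (m - a + (n - i)) - (m - a) = n - i := by omega
      have h3 : (a + i).choose a = (a + i).choose i := by
        rw [← Nat.choose_symm (Nat.le_add_right a i)]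
        congr 1
        omega
      have h4 : ((m - a) + (n - i)).choose (m - a) = ((m - a) + (n - i)).choose (n - i) := by
        rw [← Nat.choose_symm (Nat.le_add_right _ _), Nat.add_sub_cancel_left]
      rw [h1, h2, h3, h4]
      simp only [bc]
      ring
  · intro k hk hnk
    rw [Finset.mem_range] at hk
    rw [Finset.mem_Icc] at hnk
    rcases lt_or_ge k a with hlt | hge
    · rw [Nat.choose_eq_zero_of_lt hlt]
      push_cast
      ring
    · have : m + n - k < m - a := by omega
      rw [Nat.choose_eq_zero_of_lt this]
      push_cast
      ring

abbrev S := Polynomial (Polynomial ℝ)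
def uu : S := Polynomial.C Polynomial.X
def ee (r : ℝ) : S := Polynomial.C (Polynomial.C r)
def cf (P : S) (m n : ℕ) : ℝ := (P.coeff n).coeff m

lemma cf_add (P Q : S) (m n : ℕ) : cf (P + Q) m n = cf P m n + cf Q m n := by
  simp [cf]

lemma cf_sub (P Q : S) (m n : ℕ) : cf (P - Q) m n = cf P m n - cf Q m n := by
  simp [cf]

lemma cf_sum {ι : Type*} (s : Finset ι) (f : ι → S) (m n : ℕ) :
    cf (∑ i ∈ s, f i) m n = ∑ i ∈ s, cf (f i) m n := by
  simp [cf, Polynomial.finset_sum_coeff]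

lemma cf_ee_mul (r : ℝ) (P : S) (m n : ℕ) : cf (ee r * P) m n = r * cf P m n := by
  simp [cf, ee, Polynomial.coeff_C_mul]

lemma cf_u_mul (P : S) (m n : ℕ) :
    cf (uu * P) m n = if m = 0 then 0 else cf P (m - 1) n := by
  cases m with
  | zero => simp [cf, uu, Polynomial.coeff_C_mul, Polynomial.mul_coeff_zero]
  | succ m => simp [cf, uu, Polynomial.coeff_C_mul, Polynomial.coeff_X_mul]

lemma cf_X_mul (P : S) (m n : ℕ) :
    cf (Polynomial.X * P) m n = if n = 0 then 0 else cf P m (n - 1) := by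
  cases n with
  | zero => simp [cf, Polynomial.mul_coeff_zero]
  | succ n => simp [cf, Polynomial.coeff_X_mul]

lemma cf_deriv (P : S) (m n : ℕ) :
    cf (Polynomial.derivative P) m n = ((n : ℝ) + 1) * cf P m (n + 1) := by
  simp only [cf, Polynomial.coeff_derivative]
  rw [show ((n : Polynomial ℝ) + 1) = Polynomial.C ((n : ℝ) + 1) by
    rw [map_add, map_one, Polynomial.C_eq_natCast]]
  rw [Polynomial.coeff_mul_C]
  ring

lemma cf_pow (r : ℝ) (k m n : ℕ) :
    cf ((uu + ee r * Polynomial.X) ^ k) m n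
      = if m + n = k then (k.choose n : ℝ) * r ^ n else 0 := by
  rw [add_pow, cf_sum]
  have hterm : ∀ i ∈ Finset.range (k + 1),
      cf (uu ^ i * (ee r * Polynomial.X) ^ (k - i) * ((k.choose i : ℕ) : S)) m n
        = if i = m ∧ k - i = n then (k.choose i : ℝ) * r ^ (k - i) else 0 := by
    intro i hi
    have e1 : (ee r * Polynomial.X) ^ (k - i)
        = ee (r ^ (k - i)) * Polynomial.X ^ (k - i) := by
      rw [mul_pow]
      congr 1
      unfold ee
      rw [← Polynomial.C_pow, ← Polynomial.C_pow]
    have e2 : ee ((k.choose i : ℝ)) = ((k.choose i : ℕ) : S) := by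
      unfold ee
      rw [Polynomial.C_eq_natCast, Polynomial.C_eq_natCast]
    have e3 : uu ^ i = Polynomial.C (Polynomial.X ^ i) := by
      unfold uu
      rw [← Polynomial.C_pow]
    have key : uu ^ i * (ee r * Polynomial.X) ^ (k - i) * ((k.choose i : ℕ) : S)
        = Polynomial.C (Polynomial.C (r ^ (k - i) * (k.choose i : ℝ)) * Polynomial.X ^ i)
            * Polynomial.X ^ (k - i) := by
      rw [e1, e3, ← e2]
      simp only [ee, map_mul]
      ring
    rw [key, cf]
    rw [Polynomial.coeff_mul_X_pow', Polynomial.coeff_C]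
    by_cases h1 : k - i ≤ n
    · rw [if_pos h1]
      by_cases h2 : n - (k - i) = 0
      · rw [if_pos h2]
        rw [Polynomial.coeff_C_mul, Polynomial.coeff_X_pow]
        by_cases h3 : m = i
        · subst h3
          rw [if_pos rfl]
          have : k - m = n := by omega
          rw [if_pos ⟨rfl, this⟩]
          ring
        · rw [if_neg (by omega), if_neg (by tauto)]
          ring
      · rw [if_neg h2]
        rw [if_neg (by omega)]
        simp
    · rw [if_neg h1]
      rw [if_neg (by omega)]
      simp
  rw [Finset.sum_congr rfl hterm]
  by_cases hmk : m + n = k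
  · rw [if_pos hmk]
    rw [Finset.sum_eq_single m]
    · rw [if_pos ⟨rfl, by omega⟩, show k - m = n by omega,
        show k.choose m = k.choose n by rw [show m = k - n by omega, Nat.choose_symm (by omega)]]
    · intro i _ hne
      rw [if_neg (by tauto)]
    · intro hmem
      exact absurd (Finset.mem_range.mpr (by omega)) hmem
  · rw [if_neg hmk]
    apply Finset.sum_eq_zero
    intro i hi
    rw [Finset.mem_range] at hi
    rw [if_neg]
    rintro ⟨rfl, h2⟩
    omega

lemma bc_zero (α : ℝ) : bc α 0 = 1 := by simp [bc, poch]

lemma bc_one (α : ℝ) : bc α 1 = α := by simp [bc, poch]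

lemma K1 (α : ℝ) (k : ℕ) : ((k : ℝ) + 1) * bc α (k + 1) = (α + k) * bc α k := by
  have h : poch α (k+1) = poch α k * (α + k) := by
    simp [poch, ascPochhammer_succ_right]
  have hf : (Nat.factorial (k+1) : ℝ) = ((k:ℝ)+1) * Nat.factorial k := by
    push_cast [Nat.factorial_succ]; ring
  have hk : ((k:ℝ)+1) ≠ 0 := by positivity
  have hfk : (Nat.factorial k : ℝ) ≠ 0 := by positivity
  rw [bc, bc, h, hf]
  field_simp
def ww (r : ℝ) : S := uu + ee r * Polynomial.X

def gg (α r : ℝ) (N : ℕ) : S := ∑ k ∈ Finset.range (N+1), ee (bc α k) * ww r ^ k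

lemma ee_nat (j : ℕ) : ((j : ℕ) : S) = ee (j : ℝ) := by
  unfold ee
  rw [Polynomial.C_eq_natCast, Polynomial.C_eq_natCast]

lemma cf_mul (P Q : S) (m n : ℕ) :
    cf (P * Q) m n = ∑ p ∈ Finset.HasAntidiagonal.antidiagonal n, ∑ q ∈ Finset.HasAntidiagonal.antidiagonal m,
      cf P q.1 p.1 * cf Q q.2 p.2 := by
  rw [cf, Polynomial.coeff_mul, Polynomial.finset_sum_coeff]
  exact Finset.sum_congr rfl fun p _ => Polynomial.coeff_mul _ _ _

lemma cf_gg (α r : ℝ) (N m n : ℕ) :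
    cf (gg α r N) m n
      = if m + n ≤ N then bc α (m + n) * ((m + n).choose n : ℝ) * r ^ n else 0 := by
  rw [gg, cf_sum]
  simp only [cf_ee_mul, ww, cf_pow]
  by_cases h : m + n ≤ N
  · rw [if_pos h]
    rw [Finset.sum_eq_single (m + n)]
    · rw [if_pos rfl]; ring
    · intro k _ hne
      rw [if_neg (fun hc => hne hc.symm), mul_zero]
    · intro hmem
      exact absurd (Finset.mem_range.mpr (by omega)) hmem
  · rw [if_neg h]
    apply Finset.sum_eq_zero
    intro k hk
    rw [Finset.mem_range] at hk
    rw [if_neg (by omega), mul_zero]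

lemma cf_pow_mul_zero (r : ℝ) (N : ℕ) (Q : S) (m n : ℕ) (h : m + n < N) :
    cf (ww r ^ N * Q) m n = 0 := by
  rw [cf_mul]
  apply Finset.sum_eq_zero
  intro p hp
  apply Finset.sum_eq_zero
  intro q hq
  rw [Finset.HasAntidiagonal.mem_antidiagonal] at hp hq
  rw [ww, cf_pow, if_neg (by omega), zero_mul]

lemma P3 (α r : ℝ) (N : ℕ) :
    (1 - ww r) * Polynomial.derivative (gg α r N)
      = ee r * (ee α * gg α r N - ee (((N:ℝ) + 1) * bc α (N + 1)) * ww r ^ N) := by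
  induction N with
  | zero =>
      rw [gg]
      rw [show (0:ℕ) + 1 = 1 from rfl, Finset.sum_range_one, pow_zero, mul_one]
      rw [show Polynomial.derivative (ee (bc α 0)) = 0 from Polynomial.derivative_C]
      rw [mul_zero]
      rw [bc_zero, bc_one]
      rw [show ee (1:ℝ) = 1 by unfold ee; simp]
      rw [show ((0:ℕ):ℝ) + 1 = 1 by norm_num]
      rw [show (1:ℝ) * α = α by ring]
      ring
  | succ N ih =>
      have hstep : gg α r (N + 1) = gg α r N + ee (bc α (N + 1)) * ww r ^ (N + 1) := by
        rw [gg, gg, Finset.sum_range_succ]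
      have hw : Polynomial.derivative (ww r) = ee r := by
        unfold ww uu ee
        simp
      have hee2 : ∀ x y : ℝ, ee (x * y) = ee x * ee y := fun x y => by
        unfold ee
        rw [← map_mul, ← map_mul]
      have hcast : ((N + 1 : ℕ) : Polynomial ℝ) = Polynomial.C ((N : ℝ) + 1) := by
        rw [← Polynomial.C_eq_natCast]
        congr 1
        push_cast
        ring
      have hd : Polynomial.derivative (ee (bc α (N + 1)) * ww r ^ (N + 1))
          = ee (((N:ℝ) + 1) * bc α (N + 1)) * ww r ^ N * ee r := by
        rw [show ee (bc α (N + 1)) = Polynomial.C (Polynomial.C (bc α (N + 1))) from rfl]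
        rw [Polynomial.derivative_C_mul, Polynomial.derivative_pow, hw]
        rw [show N + 1 - 1 = N from rfl]
        rw [hcast, hee2]
        unfold ee
        ring
      have hsc : ee (((N:ℝ) + 1 + 1) * bc α (N + 1 + 1))
          = ee (α * bc α (N + 1)) + ee (((N:ℝ) + 1) * bc α (N + 1)) := by
        unfold ee
        rw [← map_add, ← map_add]
        congr 1
        congr 1
        have := K1 α (N + 1)
        push_cast at this ⊢
        linear_combination this
      rw [hstep, map_add, hd]
      rw [mul_add, ih]
      push_cast
      rw [hsc]
      rw [hee2 α (bc α (N+1)), hee2 ((N:ℝ)+1) (bc α (N+1))]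
      ring

lemma ee_one : ee 1 = 1 := by unfold ee; simp

lemma ee_neg_one : ee (-1) = -1 := by unfold ee; simp

lemma cf_FF (κ₁ κ₂ : ℝ) (N m n : ℕ) (h : m + n ≤ N) :
    cf (gg κ₁ 1 N * gg κ₂ (-1) N) m n = ahat κ₁ κ₂ n m := by
  rw [cf_mul, ahat]
  refine Finset.sum_congr rfl fun p hp => Finset.sum_congr rfl fun q hq => ?_
  rw [Finset.HasAntidiagonal.mem_antidiagonal] at hp hq
  rw [cf_gg, cf_gg, if_pos (by omega), if_pos (by omega)]
  rw [one_pow]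
  ring

lemma P4 (κ₁ κ₂ : ℝ) (N : ℕ) :
    (1 - ww 1) * (1 - ww (-1)) * Polynomial.derivative (gg κ₁ 1 N * gg κ₂ (-1) N)
      = ee κ₁ * ((1 - ww (-1)) * (gg κ₁ 1 N * gg κ₂ (-1) N))
        - ee κ₂ * ((1 - ww 1) * (gg κ₁ 1 N * gg κ₂ (-1) N))
        - ww 1 ^ N * (ee (((N:ℝ) + 1) * bc κ₁ (N + 1)) * ((1 - ww (-1)) * gg κ₂ (-1) N))
        + ww (-1) ^ N * (ee (((N:ℝ) + 1) * bc κ₂ (N + 1)) * ((1 - ww 1) * gg κ₁ 1 N)) := by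
  rw [Polynomial.derivative_mul]
  have h1 := P3 κ₁ 1 N
  have h2 := P3 κ₂ (-1) N
  rw [ee_one, one_mul] at h1
  rw [ee_neg_one] at h2
  linear_combination ((1 - ww (-1)) * gg κ₂ (-1) N) * h1 + ((1 - ww 1) * gg κ₁ 1 N) * h2

lemma KEY (κ₁ κ₂ : ℝ) (m n : ℕ) :
    ((n:ℝ)+1) * (ahat κ₁ κ₂ (n+1) m)
      - 2*((n:ℝ)+1) * (if m = 0 then 0 else ahat κ₁ κ₂ (n+1) (m-1))
      + ((n:ℝ)+1) * (if m ≤ 1 then 0 else ahat κ₁ κ₂ (n+1) (m-2))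
      - (if n ≤ 1 then 0 else ((n:ℝ)-1) * ahat κ₁ κ₂ (n-1) m)
    = κ₁ * (ahat κ₁ κ₂ n m + (if n = 0 then 0 else ahat κ₁ κ₂ (n-1) m)
            - (if m = 0 then 0 else ahat κ₁ κ₂ n (m-1)))
      - κ₂ * (ahat κ₁ κ₂ n m - (if n = 0 then 0 else ahat κ₁ κ₂ (n-1) m)
            - (if m = 0 then 0 else ahat κ₁ κ₂ n (m-1))) := by
  set N := m + n + 2 with hN
  set G := gg κ₁ 1 N * gg κ₂ (-1) N with hG
  have hw1 : ww 1 = uu + Polynomial.X := by rw [ww, ee_one, one_mul]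
  have hw2 : ww (-1) = uu - Polynomial.X := by rw [ww, ee_neg_one]; ring
  have hP := P4 κ₁ κ₂ N
  have eL : (1 - ww 1) * (1 - ww (-1)) * Polynomial.derivative G
      = Polynomial.derivative G - uu * Polynomial.derivative G
        - uu * Polynomial.derivative G
        + uu * (uu * Polynomial.derivative G)
        - Polynomial.X * (Polynomial.X * Polynomial.derivative G) := by
    rw [hw1, hw2]; ring
  have eR1 : (1 - ww (-1)) * G = G - uu * G + Polynomial.X * G := by rw [hw2]; ring
  have eR2 : (1 - ww 1) * G = G - uu * G - Polynomial.X * G := by rw [hw1]; ring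
  rw [eL, eR1, eR2] at hP
  have hval := congrArg (fun P => cf P m n) hP
  simp only [cf_add, cf_sub] at hval
  rw [cf_pow_mul_zero 1 N _ m n (by omega), cf_pow_mul_zero (-1) N _ m n (by omega)] at hval
  simp only [cf_ee_mul, cf_u_mul, cf_X_mul, cf_deriv, cf_add, cf_sub] at hval
  have hFFall : ∀ a b : ℕ, a ≤ m → b ≤ n + 1 → cf G a b = ahat κ₁ κ₂ b a := by
    intro a b ha hb
    exact cf_FF κ₁ κ₂ N a b (by omega)
  rw [hFFall m (n+1) le_rfl le_rfl] at hval
  rw [hFFall (m-1) (n+1) (by omega) le_rfl] at hval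
  rw [hFFall (m-1-1) (n+1) (by omega) le_rfl] at hval
  rw [hFFall m (n-1-1+1) le_rfl (by omega)] at hval
  rw [hFFall m n le_rfl (by omega)] at hval
  rw [hFFall (m-1) n (by omega) (by omega)] at hval
  rw [hFFall m (n-1) le_rfl (by omega)] at hval
  rcases m with _ | _ | m <;> rcases n with _ | _ | n <;>
    · simp only [if_pos, if_neg, Nat.succ_ne_zero, Nat.add_sub_cancel, reduceIte] at hval ⊢
      norm_num at hval ⊢
      push_cast at hval ⊢
      linear_combination hval

/-! ### Power series side -/

open PowerSeries

def aps (κ₁ κ₂ : ℝ) (n : ℕ) : PowerSeries ℝ := PowerSeries.mk (arr κ₁ κ₂ n)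

lemma Aser_eq (κ : ℝ) (n : ℕ) : Aser κ n = aps κ κ n := rfl

lemma Bser_eq (κ : ℝ) (n : ℕ) : Bser κ n = aps (κ + 1) κ n := rfl

lemma coeff_X_mul' (f : PowerSeries ℝ) (m : ℕ) :
    PowerSeries.coeff m (PowerSeries.X * f)
      = if m = 0 then 0 else PowerSeries.coeff (m - 1) f := by
  cases m with
  | zero => simp
  | succ m => simp [PowerSeries.coeff_succ_X_mul]

/-- the master recurrence -/
lemma PS1 (κ₁ κ₂ : ℝ) (n : ℕ) :
    ((n:ℝ)+1) • ((1 - PowerSeries.X)^2 * aps κ₁ κ₂ (n+1))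
      = (κ₁ - κ₂) • ((1 - PowerSeries.X) * aps κ₁ κ₂ n)
        + (if n = 0 then 0 else (κ₁ + κ₂ + (n:ℝ) - 1) • aps κ₁ κ₂ (n-1)) := by
  have hite : ∀ (k : ℕ) (z : ℝ),
      (if k + 1 ≤ 1 then (0:ℝ) else (((k+1:ℕ):ℝ) - 1) * z) = (k:ℝ) * z := by
    intro k z
    rcases k with _ | k
    · simp
    · rw [if_neg (by omega)]
      push_cast
      ring
  ext m
  have e1 : (1 - PowerSeries.X)^2 * aps κ₁ κ₂ (n+1)
      = aps κ₁ κ₂ (n+1) - PowerSeries.X * aps κ₁ κ₂ (n+1)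
        - PowerSeries.X * aps κ₁ κ₂ (n+1)
        + PowerSeries.X * (PowerSeries.X * aps κ₁ κ₂ (n+1)) := by ring
  have e2 : (1 - PowerSeries.X) * aps κ₁ κ₂ n
      = aps κ₁ κ₂ n - PowerSeries.X * aps κ₁ κ₂ n := by ring
  rw [e1, e2]
  have hk := KEY κ₁ κ₂ m n
  simp only [map_smul, map_add, map_sub, coeff_X_mul', smul_eq_mul,
    apply_ite (PowerSeries.coeff m), map_zero]
  simp only [aps, PowerSeries.coeff_mk, arr_eq_ahat]
  rcases n with _ | n
  · simp only [Nat.sub_sub, Nat.zero_le, if_pos, if_true, Nat.cast_zero] at hk ⊢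
    norm_num at hk ⊢
    split_ifs at hk ⊢ <;> first | omega | (push_cast at hk ⊢; linear_combination hk)
  · rw [hite n] at hk
    simp only [Nat.sub_sub, Nat.add_sub_cancel, Nat.succ_ne_zero, if_false] at hk ⊢
    split_ifs at hk ⊢ <;> first | omega | (push_cast at hk ⊢; linear_combination hk)

def Sat (α : ℝ) (f : PowerSeries ℝ) : Prop :=
  ∀ m : ℕ, ((m:ℝ)+1) * PowerSeries.coeff (m+1) f = (α + m) * PowerSeries.coeff m f

def fser (α : ℝ) : PowerSeries ℝ := PowerSeries.mk (bc α)

lemma sat_fser (α : ℝ) : Sat α (fser α) := fun m => by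
  simp only [fser, PowerSeries.coeff_mk]
  exact K1 α m

lemma sat_mul {α β : ℝ} {f g : PowerSeries ℝ} (hf : Sat α f) (hg : Sat β g) :
    Sat (α + β) (f * g) := by
  intro m
  rw [PowerSeries.coeff_mul, PowerSeries.coeff_mul,
    Finset.Nat.sum_antidiagonal_eq_sum_range_succ_mk,
    Finset.Nat.sum_antidiagonal_eq_sum_range_succ_mk, Finset.mul_sum, Finset.mul_sum]
  have split : ∀ i ∈ Finset.range (m + 2),
      ((m:ℝ)+1) * (PowerSeries.coeff i f * PowerSeries.coeff (m+1-i) g)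
        = (i:ℝ) * PowerSeries.coeff i f * PowerSeries.coeff (m+1-i) g
          + PowerSeries.coeff i f * (((m+1-i:ℕ):ℝ) * PowerSeries.coeff (m+1-i) g) := by
    intro i hi
    rw [Finset.mem_range] at hi
    rw [Nat.cast_sub (by omega)]
    push_cast
    ring
  rw [Finset.sum_congr rfl split, Finset.sum_add_distrib]
  have h1 : ∑ i ∈ Finset.range (m + 2),
      (i:ℝ) * PowerSeries.coeff i f * PowerSeries.coeff (m+1-i) g
      = ∑ i ∈ Finset.range (m + 1),
        (α + i) * PowerSeries.coeff i f * PowerSeries.coeff (m-i) g := by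
    rw [Finset.sum_range_succ']
    simp only [Nat.cast_zero, zero_mul, add_zero]
    refine Finset.sum_congr rfl fun i hi => ?_
    have hidx : m + 1 - (i+1) = m - i := by omega
    rw [hidx]
    have hfi := hf i
    push_cast at hfi ⊢
    linear_combination (PowerSeries.coeff (m-i) g) * hfi
  have h2 : ∑ i ∈ Finset.range (m + 2),
      PowerSeries.coeff i f * (((m+1-i:ℕ):ℝ) * PowerSeries.coeff (m+1-i) g)
      = ∑ i ∈ Finset.range (m + 1),
        PowerSeries.coeff i f * ((β + ((m-i:ℕ):ℝ)) * PowerSeries.coeff (m-i) g) := by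
    rw [Finset.sum_range_succ]
    simp only [Nat.sub_self, Nat.cast_zero, zero_mul, mul_zero, add_zero]
    refine Finset.sum_congr rfl fun i hi => ?_
    rw [Finset.mem_range] at hi
    have hidx : m + 1 - i = (m - i) + 1 := by omega
    rw [hidx]
    have hgi := hg (m - i)
    push_cast at hgi ⊢
    linear_combination (PowerSeries.coeff i f) * hgi
  rw [h1, h2, ← Finset.sum_add_distrib]
  refine Finset.sum_congr rfl fun i hi => ?_
  rw [Finset.mem_range] at hi
  rw [Nat.cast_sub (by omega)]
  ring

lemma sat_unique {α : ℝ} {f g : PowerSeries ℝ} (hf : Sat α f) (hg : Sat α g)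
    (h0 : PowerSeries.coeff 0 f = PowerSeries.coeff 0 g) : f = g := by
  ext m
  induction m with
  | zero => exact h0
  | succ m ih =>
      have h1 := hf m
      have h2 := hg m
      rw [ih] at h1
      have hm : ((m:ℝ)+1) ≠ 0 := by positivity
      exact mul_left_cancel₀ hm (h1.trans h2.symm)

lemma sat_one_sub_X : Sat (-1) (1 - PowerSeries.X : PowerSeries ℝ) := by
  intro m
  rcases m with _ | _ | m <;>
    simp [PowerSeries.coeff_one, PowerSeries.coeff_X, map_sub]

lemma sat_pow (N : ℕ) : Sat (-(N:ℝ)) ((1 - PowerSeries.X : PowerSeries ℝ) ^ N) := by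
  induction N with
  | zero =>
      intro m
      rcases m with _ | m <;> simp [PowerSeries.coeff_one]
  | succ N ih =>
      have := sat_mul ih sat_one_sub_X
      rw [show (-(N:ℝ)) + (-1) = -(((N+1:ℕ)):ℝ) by push_cast; ring] at this
      rw [pow_succ]
      exact this

lemma fser_mul (α β : ℝ) : fser α * fser β = fser (α + β) := by
  refine sat_unique (sat_mul (sat_fser α) (sat_fser β)) (sat_fser (α+β)) ?_
  rw [PowerSeries.coeff_zero_eq_constantCoeff, map_mul]
  simp [fser, PowerSeries.constantCoeff_mk, bc_zero]

lemma fser_neg_nat (N : ℕ) : fser (-(N:ℝ)) = (1 - PowerSeries.X : PowerSeries ℝ) ^ N := by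
  refine sat_unique (sat_fser _) (sat_pow N) ?_
  rw [PowerSeries.coeff_zero_eq_constantCoeff, map_pow]
  simp [fser, PowerSeries.constantCoeff_mk, bc_zero]

lemma aps_zero_eq (κ₁ κ₂ : ℝ) : aps κ₁ κ₂ 0 = fser κ₁ * fser κ₂ := by
  ext m
  rw [aps, PowerSeries.coeff_mk, arr_eq_ahat, ahat, PowerSeries.coeff_mul]
  rw [Finset.Nat.antidiagonal_zero, Finset.sum_singleton]
  refine Finset.sum_congr rfl fun q hq => ?_
  simp [fser, bc]

lemma one_sub_X_ne : (1 - PowerSeries.X : PowerSeries ℝ) ≠ 0 := fun h => by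
  have := congrArg (PowerSeries.constantCoeff) h
  simp at this

lemma C_ne_zero {r : ℝ} (hr : r ≠ 0) : PowerSeries.C r ≠ 0 := fun hc => by
  have := congrArg (PowerSeries.constantCoeff) hc
  simp at this
  exact hr this

lemma csmul (r : ℝ) (f : PowerSeries ℝ) : r • f = PowerSeries.C r * f :=
  PowerSeries.smul_eq_C_mul f r

/-- A-recurrence, C-multiplied form -/
lemma RA (κ : ℝ) (n : ℕ) :
    PowerSeries.C ((n:ℝ)+2) * ((1 - PowerSeries.X)^2 * aps κ κ (n+2))
      = PowerSeries.C (2*κ + n) * aps κ κ n := by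
  have h := PS1 κ κ (n+1)
  rw [sub_self, zero_smul, zero_add, if_neg (Nat.succ_ne_zero n)] at h
  rw [csmul, csmul] at h
  rw [show (((n+1:ℕ)):ℝ) + 1 = (n:ℝ)+2 by push_cast; ring] at h
  rw [show κ + κ + ((n+1:ℕ):ℝ) - 1 = 2*κ + n by push_cast; ring] at h
  rw [show n + 1 - 1 = n from rfl] at h
  exact h

lemma A1_zero (κ : ℝ) : aps κ κ 1 = 0 := by
  have h := PS1 κ κ 0
  rw [sub_self, zero_smul, if_pos rfl, zero_add, Nat.cast_zero, zero_add, one_smul, add_zero] at h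
  rcases mul_eq_zero.mp h with h' | h'
  · exact absurd h' (pow_ne_zero 2 one_sub_X_ne)
  · exact h'

lemma A_odd_zero (κ : ℝ) (j : ℕ) : aps κ κ (2*j+1) = 0 := by
  induction j with
  | zero => exact A1_zero κ
  | succ j ih =>
      have h := RA κ (2*j+1)
      rw [show 2*j+1+2 = 2*(j+1)+1 by omega] at h
      rw [ih, mul_zero] at h
      rcases mul_eq_zero.mp h with h' | h'
      · exact absurd h' (C_ne_zero (by positivity))
      · rcases mul_eq_zero.mp h' with h'' | h''
        · exact absurd h'' (pow_ne_zero 2 one_sub_X_ne)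
        · exact h''

lemma A_even (κ : ℝ) (j : ℕ) :
    aps κ κ (2*j) * (1 - PowerSeries.X)^(2*j)
      = PowerSeries.C (bc κ j) * aps κ κ 0 := by
  induction j with
  | zero => simp [bc_zero]
  | succ j ih =>
      have h2j : ((2*j:ℕ):ℝ) + 2 ≠ 0 := by positivity
      have hK := K1 κ j
      -- (2j+2) * bc (j+1) = 2(κ+j) bc j
      have hsc : (((2*j:ℕ):ℝ)+2) * bc κ (j+1) = (2*κ + (2*j:ℕ)) * bc κ j := by
        push_cast at hK ⊢
        linear_combination 2 * hK
      -- rearrange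
      have goal1 : PowerSeries.C (((2*j:ℕ):ℝ)+2) * (aps κ κ (2*(j+1)) * (1 - PowerSeries.X)^(2*(j+1)))
          = PowerSeries.C (((2*j:ℕ):ℝ)+2) * (PowerSeries.C (bc κ (j+1)) * aps κ κ 0) := by
        calc PowerSeries.C (((2*j:ℕ):ℝ)+2) * (aps κ κ (2*(j+1)) * (1 - PowerSeries.X)^(2*(j+1)))
            = (PowerSeries.C (((2*j:ℕ):ℝ)+2) * ((1 - PowerSeries.X)^2 * aps κ κ (2*j+2))) * (1 - PowerSeries.X)^(2*j) := by
              rw [show 2*(j+1) = 2*j+2 by omega]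
              ring
          _ = (PowerSeries.C (2*κ + (2*j:ℕ)) * aps κ κ (2*j)) * (1 - PowerSeries.X)^(2*j) := by rw [RA κ (2*j)]
          _ = PowerSeries.C (2*κ + (2*j:ℕ)) * (PowerSeries.C (bc κ j) * aps κ κ 0) := by
              rw [mul_assoc, ih]
          _ = PowerSeries.C ((2*κ + (2*j:ℕ)) * bc κ j) * aps κ κ 0 := by
              rw [← mul_assoc, ← map_mul]
          _ = PowerSeries.C ((((2*j:ℕ):ℝ)+2) * bc κ (j+1)) * aps κ κ 0 := by rw [← hsc]
          _ = PowerSeries.C (((2*j:ℕ):ℝ)+2) * (PowerSeries.C (bc κ (j+1)) * aps κ κ 0) := by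
              rw [map_mul, mul_assoc]
      exact mul_left_cancel₀ (C_ne_zero h2j) goal1

/-- B-recurrence -/
lemma RB (κ : ℝ) (n : ℕ) :
    PowerSeries.C ((n:ℝ)+2) * ((1 - PowerSeries.X)^2 * aps (κ+1) κ (n+2))
      = (1 - PowerSeries.X) * aps (κ+1) κ (n+1)
        + PowerSeries.C (2*κ + n + 1) * aps (κ+1) κ n := by
  have h := PS1 (κ+1) κ (n+1)
  rw [if_neg (Nat.succ_ne_zero n)] at h
  rw [show κ + 1 - κ = (1:ℝ) by ring, one_smul] at h
  rw [csmul, csmul] at h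
  rw [show (((n+1:ℕ)):ℝ) + 1 = (n:ℝ)+2 by push_cast; ring] at h
  rw [show (κ+1) + κ + ((n+1:ℕ):ℝ) - 1 = 2*κ + n + 1 by push_cast; ring] at h
  rw [show n + 1 - 1 = n from rfl] at h
  exact h

lemma B1 (κ : ℝ) : (1 - PowerSeries.X) * aps (κ+1) κ 1 = aps (κ+1) κ 0 := by
  have h := PS1 (κ+1) κ 0
  rw [if_pos rfl, add_zero, Nat.cast_zero, zero_add, one_smul,
    show κ + 1 - κ = (1:ℝ) by ring, one_smul] at h
  refine mul_left_cancel₀ one_sub_X_ne ?_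
  calc (1 - PowerSeries.X) * ((1 - PowerSeries.X) * aps (κ+1) κ 1)
      = (1 - PowerSeries.X)^2 * aps (κ+1) κ 1 := by ring
    _ = (1 - PowerSeries.X) * aps (κ+1) κ 0 := h

lemma B_scalar (κ : ℝ) (n : ℕ) :
    ((n:ℝ)+2) * bc (κ+1) ((n+2)/2)
      = bc (κ+1) ((n+1)/2) + (2*κ + n + 1) * bc (κ+1) (n/2) := by
  rcases Nat.even_or_odd n with ⟨t, ht⟩ | ⟨t, ht⟩
  · subst ht
    rw [show (t + t + 2)/2 = t + 1 by omega, show (t + t + 1)/2 = t by omega,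
      show (t + t)/2 = t by omega]
    have hK := K1 (κ+1) t
    push_cast
    linear_combination 2 * hK
  · subst ht
    rw [show (2*t + 1 + 2)/2 = t + 1 by omega, show (2*t + 1 + 1)/2 = t + 1 by omega,
      show (2*t + 1)/2 = t by omega]
    have hK := K1 (κ+1) t
    push_cast
    linear_combination 2 * hK

lemma B_closed (κ : ℝ) : ∀ n : ℕ,
    aps (κ+1) κ n * (1 - PowerSeries.X)^n
      = PowerSeries.C (bc (κ+1) (n/2)) * aps (κ+1) κ 0 := by
  have key : ∀ n : ℕ,
      (aps (κ+1) κ n * (1 - PowerSeries.X)^n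
        = PowerSeries.C (bc (κ+1) (n/2)) * aps (κ+1) κ 0) ∧
      (aps (κ+1) κ (n+1) * (1 - PowerSeries.X)^(n+1)
        = PowerSeries.C (bc (κ+1) ((n+1)/2)) * aps (κ+1) κ 0) := by
    intro n
    induction n with
    | zero =>
        constructor
        · simp [bc_zero]
        · rw [show (1:ℕ)/2 = 0 by omega, bc_zero, map_one, one_mul, pow_one, mul_comm]
          exact B1 κ
    | succ n ih =>
        refine ⟨ih.2, ?_⟩
        have h2n : ((n:ℝ)+2) ≠ 0 := by positivity
        have goal1 : PowerSeries.C ((n:ℝ)+2) * (aps (κ+1) κ (n+2) * (1 - PowerSeries.X)^(n+2))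
            = PowerSeries.C ((n:ℝ)+2)
              * (PowerSeries.C (bc (κ+1) ((n+2)/2)) * aps (κ+1) κ 0) := by
          calc PowerSeries.C ((n:ℝ)+2) * (aps (κ+1) κ (n+2) * (1 - PowerSeries.X)^(n+2))
              = (PowerSeries.C ((n:ℝ)+2) * ((1 - PowerSeries.X)^2 * aps (κ+1) κ (n+2)))
                  * (1 - PowerSeries.X)^n := by ring
            _ = ((1 - PowerSeries.X) * aps (κ+1) κ (n+1)
                  + PowerSeries.C (2*κ + n + 1) * aps (κ+1) κ n) * (1 - PowerSeries.X)^n := by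
                rw [RB κ n]
            _ = aps (κ+1) κ (n+1) * (1 - PowerSeries.X)^(n+1)
                  + PowerSeries.C (2*κ + n + 1) * (aps (κ+1) κ n * (1 - PowerSeries.X)^n) := by
                ring
            _ = PowerSeries.C (bc (κ+1) ((n+1)/2)) * aps (κ+1) κ 0
                  + PowerSeries.C (2*κ + n + 1)
                    * (PowerSeries.C (bc (κ+1) (n/2)) * aps (κ+1) κ 0) := by
                rw [ih.1, ih.2]
            _ = PowerSeries.C (bc (κ+1) ((n+1)/2) + (2*κ + n + 1) * bc (κ+1) (n/2))
                  * aps (κ+1) κ 0 := by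
                simp only [map_add, map_mul, map_one, map_natCast]
                ring
            _ = PowerSeries.C (((n:ℝ)+2) * bc (κ+1) ((n+2)/2)) * aps (κ+1) κ 0 := by
                rw [← B_scalar κ n]
            _ = PowerSeries.C ((n:ℝ)+2)
                  * (PowerSeries.C (bc (κ+1) ((n+2)/2)) * aps (κ+1) κ 0) := by
                rw [map_mul, mul_assoc]
        exact mul_left_cancel₀ (C_ne_zero h2n) goal1
  exact fun n => (key n).1

/-! ### specialization -/

lemma poch_ne_zero {α : ℝ} (h : ∀ i : ℕ, α + i ≠ 0) (j : ℕ) : poch α j ≠ 0 := by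
  induction j with
  | zero => simp [poch]
  | succ j ih =>
      have hs : poch α (j+1) = poch α j * (α + j) := by
        simp [poch, ascPochhammer_succ_right]
      rw [hs]
      exact mul_ne_zero ih (h j)

lemma bc_ne_zero {α : ℝ} (h : ∀ i : ℕ, α + i ≠ 0) (j : ℕ) : bc α j ≠ 0 := by
  have : (Nat.factorial j : ℝ) ≠ 0 := by positivity
  exact div_ne_zero (poch_ne_zero h j) this

lemma hroots_A (l : ℕ) : ∀ i : ℕ, (-(l:ℝ) - 1/2) + i ≠ 0 := by
  intro i heq
  have h2 : ((2*i:ℕ):ℝ) = ((2*l+1:ℕ):ℝ) := by push_cast; linarith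
  have : 2*i = 2*l+1 := by exact_mod_cast h2
  omega

lemma hroots_B (l : ℕ) : ∀ i : ℕ, (-(l:ℝ) + 1/2) + i ≠ 0 := by
  intro i heq
  have h2 : ((2*i+1:ℕ):ℝ) = ((2*l:ℕ):ℝ) := by push_cast; linarith
  have : 2*i+1 = 2*l := by exact_mod_cast h2
  omega

lemma A0l (l : ℕ) : aps (-(l:ℝ) - 1/2) (-(l:ℝ) - 1/2) 0
    = (1 - PowerSeries.X : PowerSeries ℝ)^(2*l+1) := by
  rw [aps_zero_eq, fser_mul,
    show (-(l:ℝ) - 1/2) + (-(l:ℝ) - 1/2) = -(((2*l+1:ℕ)):ℝ) by push_cast; ring,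
    fser_neg_nat]

lemma B0l (l : ℕ) : aps ((-(l:ℝ) - 1/2) + 1) (-(l:ℝ) - 1/2) 0
    = (1 - PowerSeries.X : PowerSeries ℝ)^(2*l) := by
  rw [aps_zero_eq, fser_mul,
    show ((-(l:ℝ) - 1/2) + 1) + (-(l:ℝ) - 1/2) = -(((2*l:ℕ)):ℝ) by push_cast; ring,
    fser_neg_nat]

lemma natDegree_one_sub_X_pow (d : ℕ) :
    (((1 : Polynomial ℝ) - Polynomial.X) ^ d).natDegree = d := by
  have h1 : ((1 : Polynomial ℝ) - Polynomial.X) = -(Polynomial.X - Polynomial.C 1) := by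
    rw [map_one]
    ring
  rw [h1, neg_pow]
  rw [show ((-1 : Polynomial ℝ)^d) = Polynomial.C ((-1:ℝ)^d) by
    rw [map_pow, map_neg, map_one]]
  rw [Polynomial.natDegree_C_mul (by simp [pow_ne_zero])]
  rw [(Polynomial.monic_X_sub_C (1:ℝ)).natDegree_pow]
  rw [Polynomial.natDegree_X_sub_C, mul_one]

end ABaux

/-- Let `κ = −l−1/2`.  (a) `Aₙ(u;κ) = 0` for odd `n`;
(b) `A_{2j}(u;κ) = [(−l−1/2)ⱼ/j!](1−u)^{2l+1−2j}` for all `j ≥ 0` (stated multiplicatively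
to make sense of negative exponents), and for `2j ≤ 2l` it is a polynomial in `u` of
degree `2l+1−2j`; (c) `Bₙ(u;κ) = [(−l+1/2)_{⌊n/2⌋}/⌊n/2⌋!](1−u)^{2l−n}` for all `n ≥ 0`,
and for `n ≤ 2l` it is a polynomial in `u` of degree `2l−n`. -/
theorem AB_series_polynomial (l : ℕ) :
    (∀ n : ℕ, Odd n → Aser (-(l : ℝ) - 1 / 2) n = 0) ∧
    ((∀ j : ℕ,
        Aser (-(l : ℝ) - 1 / 2) (2 * j) * (1 - PowerSeries.X) ^ (2 * j) =
          PowerSeries.C (poch (-(l : ℝ) - 1 / 2) j / (Nat.factorial j : ℝ)) *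
            (1 - PowerSeries.X) ^ (2 * l + 1)) ∧
      ∀ j : ℕ, 2 * j ≤ 2 * l →
        ∃ P : Polynomial ℝ, (P : PowerSeries ℝ) = Aser (-(l : ℝ) - 1 / 2) (2 * j) ∧
          P.natDegree = 2 * l + 1 - 2 * j) ∧
    ((∀ n : ℕ,
        Bser (-(l : ℝ) - 1 / 2) n * (1 - PowerSeries.X) ^ n =
          PowerSeries.C (poch (-(l : ℝ) + 1 / 2) (n / 2) / (Nat.factorial (n / 2) : ℝ)) *
            (1 - PowerSeries.X) ^ (2 * l)) ∧
      ∀ n : ℕ, n ≤ 2 * l →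
        ∃ P : Polynomial ℝ, (P : PowerSeries ℝ) = Bser (-(l : ℝ) - 1 / 2) n ∧
          P.natDegree = 2 * l - n) := by
  have hBrw : ((-(l:ℝ) - 1/2) + 1) = -(l:ℝ) + 1/2 := by ring
  refine ⟨?_, ⟨?_, ?_⟩, ⟨?_, ?_⟩⟩
  · rintro n ⟨j, rfl⟩
    rw [ABaux.Aser_eq]
    exact ABaux.A_odd_zero _ j
  · intro j
    have h := ABaux.A_even (-(l:ℝ) - 1/2) j
    rw [ABaux.A0l l] at h
    rw [ABaux.Aser_eq]
    exact h
  · intro j hj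
    refine ⟨Polynomial.C (ABaux.bc (-(l:ℝ) - 1/2) j) * (1 - Polynomial.X)^(2*l+1-2*j), ?_, ?_⟩
    · have h := ABaux.A_even (-(l:ℝ) - 1/2) j
      rw [ABaux.A0l l] at h
      have hsplit : ((1:PowerSeries ℝ) - PowerSeries.X)^(2*l+1)
          = (1 - PowerSeries.X)^(2*l+1-2*j) * (1 - PowerSeries.X)^(2*j) := by
        rw [← pow_add]
        congr 1
        omega
      rw [hsplit, ← mul_assoc] at h
      have h2 := mul_right_cancel₀ (pow_ne_zero (2*j) ABaux.one_sub_X_ne) h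
      rw [ABaux.Aser_eq, h2]
      simp [Polynomial.coe_mul, Polynomial.coe_pow, Polynomial.coe_sub, Polynomial.coe_one,
        Polynomial.coe_X, Polynomial.coe_C]
    · rw [Polynomial.natDegree_C_mul (ABaux.bc_ne_zero (ABaux.hroots_A l) j),
        ABaux.natDegree_one_sub_X_pow]
  · intro n
    have h := ABaux.B_closed (-(l:ℝ) - 1/2) n
    rw [ABaux.B0l l, hBrw] at h
    rw [ABaux.Bser_eq, hBrw]
    exact h
  · intro n hn
    refine ⟨Polynomial.C (ABaux.bc (-(l:ℝ) + 1/2) (n/2)) * (1 - Polynomial.X)^(2*l-n), ?_, ?_⟩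
    · have h := ABaux.B_closed (-(l:ℝ) - 1/2) n
      rw [ABaux.B0l l, hBrw] at h
      have hsplit : ((1:PowerSeries ℝ) - PowerSeries.X)^(2*l)
          = (1 - PowerSeries.X)^(2*l-n) * (1 - PowerSeries.X)^n := by
        rw [← pow_add]
        congr 1
        omega
      rw [hsplit, ← mul_assoc] at h
      have h2 := mul_right_cancel₀ (pow_ne_zero n ABaux.one_sub_X_ne) h
      rw [ABaux.Bser_eq, hBrw, h2]
      simp [Polynomial.coe_mul, Polynomial.coe_pow, Polynomial.coe_sub, Polynomial.coe_one,
        Polynomial.coe_X, Polynomial.coe_C]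
    · rw [Polynomial.natDegree_C_mul (ABaux.bc_ne_zero (ABaux.hroots_B l) (n/2)),
        ABaux.natDegree_one_sub_X_pow]
end
end

section
/- Let N ≥ 2, let a_N(x) = ∏_{1≤i<j≤N} (x_i − x_j) be the alternating polynomial, and let l ∈ ℕ₀. Then for each 1 ≤ i ≤ N, D_i(a_N^{2l+1}) = (2l+1+2κ) · a_N^{2l} · ∂a_N/∂x_i. In particular, for κ = −l−1/2 one has D_i(a_N^{2l+1}) = 0 for all i, so a_N^{2l+1} is a singular polynomial for the parameter value κ = −l−1/2. -/
open MvPolynomial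

noncomputable section

lemma altPoly_eq_prod (N : ℕ) :
    altPoly N = ∏ i : Fin N, ∏ j ∈ Finset.Ioi i, (X i - X j : MvPolynomial (Fin N) ℝ) := by
  rw [altPoly, Finset.prod_filter, Fintype.prod_prod_type]
  refine Finset.prod_congr rfl fun i _ => ?_
  rw [← Finset.prod_filter]
  congr 1
  ext j; simp

lemma prod_Ioi_eq_sign_det (N : ℕ) (v : Fin N → MvPolynomial (Fin N) ℝ) :
      (∏ a : Fin N, ∏ b ∈ Finset.Ioi a, (v a - v b)) =
        (-1 : MvPolynomial (Fin N) ℝ)^(∑ a : Fin N, (Finset.Ioi a).card) *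
          Matrix.det (Matrix.vandermonde v) := by
  rw [Matrix.det_vandermonde, ← Finset.prod_pow_eq_pow_sum, ← Finset.prod_mul_distrib]
  refine Finset.prod_congr rfl fun a _ => ?_
  rw [← Finset.prod_const, ← Finset.prod_mul_distrib]
  refine Finset.prod_congr rfl fun b _ => by ring

lemma rename_swap_altPoly (N : ℕ) {i j : Fin N} (h : i ≠ j) :
    rename (Equiv.swap i j) (altPoly N) = - altPoly N := by
  have hd : (rename (Equiv.swap i j) : MvPolynomial (Fin N) ℝ →ₐ[ℝ] _)
        (Matrix.det (Matrix.vandermonde fun k => (X k : MvPolynomial (Fin N) ℝ)))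
      = - Matrix.det (Matrix.vandermonde fun k => (X k : MvPolynomial (Fin N) ℝ)) := by
    rw [AlgHom.map_det]
    have : (Matrix.vandermonde fun k => (X k : MvPolynomial (Fin N) ℝ)).map
        (rename (Equiv.swap i j) : MvPolynomial (Fin N) ℝ →ₐ[ℝ] _)
        = (Matrix.vandermonde fun k => (X k : MvPolynomial (Fin N) ℝ)).submatrix
            (Equiv.swap i j) id := by
      ext a b
      simp [Matrix.vandermonde_apply, map_pow]
    rw [AlgHom.mapMatrix_apply, this, Matrix.det_permute, Equiv.Perm.sign_swap h]
    simp
  rw [altPoly_eq_prod, prod_Ioi_eq_sign_det, map_mul, map_pow, map_neg, map_one, hd]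
  ring

lemma pderiv_finset_prod {ι : Type*} [DecidableEq ι] {N : ℕ} (i : Fin N)
    (s : Finset ι) (f : ι → MvPolynomial (Fin N) ℝ) :
    pderiv i (∏ p ∈ s, f p) = ∑ p ∈ s, pderiv i (f p) * ∏ q ∈ s.erase p, f q := by
  classical
  induction s using Finset.induction_on with
  | empty => simp
  | insert x s hx ih =>
    rw [Finset.prod_insert hx, pderiv_mul, ih, Finset.sum_insert hx,
      Finset.erase_insert hx, Finset.mul_sum]
    congr 1
    refine Finset.sum_congr rfl fun p hp => ?_
    rw [Finset.erase_insert_of_ne (by rintro rfl; exact hx hp),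
      Finset.prod_insert (fun h => hx (Finset.mem_of_mem_erase h))]
    ring

def Spairs (N : ℕ) : Finset (Fin N × Fin N) := Finset.univ.filter (fun p => p.1 < p.2)

lemma pderiv_altPoly (N : ℕ) (i : Fin N) :
    pderiv i (altPoly N) =
      (∑ j ∈ Finset.Ioi i, ∏ q ∈ (Spairs N).erase (i, j), (X q.1 - X q.2 : MvPolynomial (Fin N) ℝ)) -
      ∑ j ∈ Finset.Iio i, ∏ q ∈ (Spairs N).erase (j, i), (X q.1 - X q.2 : MvPolynomial (Fin N) ℝ) := by
  have ha : altPoly N = ∏ p ∈ Spairs N, (X p.1 - X p.2 : MvPolynomial (Fin N) ℝ) := rfl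
  rw [ha, pderiv_finset_prod]
  have hterm : ∀ p ∈ Spairs N,
      pderiv i (X p.1 - X p.2 : MvPolynomial (Fin N) ℝ) * ∏ q ∈ (Spairs N).erase p, (X q.1 - X q.2)
      = (if p.1 = i then ∏ q ∈ (Spairs N).erase p, (X q.1 - X q.2 : MvPolynomial (Fin N) ℝ) else 0)
        - (if p.2 = i then ∏ q ∈ (Spairs N).erase p, (X q.1 - X q.2 : MvPolynomial (Fin N) ℝ) else 0) := by
    intro p _
    have e1 : pderiv i (X p.1 : MvPolynomial (Fin N) ℝ) = if p.1 = i then 1 else 0 := by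
      split_ifs with h
      · rw [h, pderiv_X_self]
      · exact pderiv_X_of_ne h
    have e2 : pderiv i (X p.2 : MvPolynomial (Fin N) ℝ) = if p.2 = i then 1 else 0 := by
      split_ifs with h
      · rw [h, pderiv_X_self]
      · exact pderiv_X_of_ne h
    rw [map_sub, e1, e2]
    split_ifs <;> ring
  rw [Finset.sum_congr rfl hterm, Finset.sum_sub_distrib]
  congr 1
  · rw [← Finset.sum_filter]
    refine Finset.sum_nbij' (fun p => p.2) (fun j => (i, j)) ?_ ?_ ?_ ?_ ?_
    · intro p hp
      simp only [Finset.mem_filter, Spairs, Finset.mem_univ, true_and] at hp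
      exact Finset.mem_Ioi.mpr (hp.2 ▸ hp.1)
    · intro j hj
      simp only [Finset.mem_filter, Spairs, Finset.mem_univ, true_and]
      simpa using Finset.mem_Ioi.mp hj
    · intro p hp
      simp only [Finset.mem_filter, Spairs, Finset.mem_univ, true_and] at hp
      exact Prod.ext hp.2.symm rfl
    · intro j _; rfl
    · intro p hp
      simp only [Finset.mem_filter, Spairs, Finset.mem_univ, true_and] at hp
      rw [show ((i, p.2) : Fin N × Fin N) = p from Prod.ext hp.2.symm rfl]
  · rw [← Finset.sum_filter]
    refine Finset.sum_nbij' (fun p => p.1) (fun j => (j, i)) ?_ ?_ ?_ ?_ ?_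
    · intro p hp
      simp only [Finset.mem_filter, Spairs, Finset.mem_univ, true_and] at hp
      exact Finset.mem_Iio.mpr (hp.2 ▸ hp.1)
    · intro j hj
      simp only [Finset.mem_filter, Spairs, Finset.mem_univ, true_and]
      simpa using Finset.mem_Iio.mp hj
    · intro p hp
      simp only [Finset.mem_filter, Spairs, Finset.mem_univ, true_and] at hp
      exact Prod.ext rfl hp.2.symm
    · intro j _; rfl
    · intro p hp
      simp only [Finset.mem_filter, Spairs, Finset.mem_univ, true_and] at hp
      rw [show ((p.1, i) : Fin N × Fin N) = p from Prod.ext rfl hp.2.symm]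

lemma key_sum (N : ℕ) (i : Fin N) :
    ∑ j ∈ Finset.univ.erase i,
        algebraMap (MvPolynomial (Fin N) ℝ) (FractionRing (MvPolynomial (Fin N) ℝ)) (altPoly N) /
        algebraMap (MvPolynomial (Fin N) ℝ) (FractionRing (MvPolynomial (Fin N) ℝ)) (X i - X j)
      = algebraMap (MvPolynomial (Fin N) ℝ) (FractionRing (MvPolynomial (Fin N) ℝ))
          (pderiv i (altPoly N)) := by
  set F := algebraMap (MvPolynomial (Fin N) ℝ) (FractionRing (MvPolynomial (Fin N) ℝ)) with hF
  set h : Fin N → MvPolynomial (Fin N) ℝ := fun j =>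
    if i < j then ∏ q ∈ (Spairs N).erase (i, j), (X q.1 - X q.2)
    else -∏ q ∈ (Spairs N).erase (j, i), (X q.1 - X q.2) with hh
  have ha : altPoly N = ∏ p ∈ Spairs N, (X p.1 - X p.2 : MvPolynomial (Fin N) ℝ) := rfl
  have hfac : ∀ j ∈ Finset.univ.erase i, altPoly N = (X i - X j) * h j := by
    intro j hj
    have hji : j ≠ i := (Finset.mem_erase.mp hj).1
    by_cases hij : i < j
    · have hmem : ((i, j) : Fin N × Fin N) ∈ Spairs N := by
        simp [Spairs, hij]
      rw [ha, ← Finset.mul_prod_erase _ _ hmem, hh]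
      simp [hij]
    · have hji' : j < i := (not_lt.mp hij).lt_of_ne hji
      have hmem : ((j, i) : Fin N × Fin N) ∈ Spairs N := by
        simp [Spairs, hji']
      rw [ha, ← Finset.mul_prod_erase _ _ hmem, hh]
      simp only [if_neg hij]
      ring
  have hne : ∀ j ∈ Finset.univ.erase i, F (X i - X j) ≠ 0 := by
    intro j hj
    have hji : j ≠ i := (Finset.mem_erase.mp hj).1
    have : (X i - X j : MvPolynomial (Fin N) ℝ) ≠ 0 :=
      sub_ne_zero.mpr fun e => hji (X_injective e).symm
    exact (map_ne_zero_iff F (IsFractionRing.injective _ _)).mpr this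
  have hterm : ∀ j ∈ Finset.univ.erase i, F (altPoly N) / F (X i - X j) = F (h j) := by
    intro j hj
    rw [div_eq_iff (hne j hj), ← map_mul]
    exact congrArg F (by rw [hfac j hj]; ring)
  rw [Finset.sum_congr rfl hterm, ← map_sum]
  congr 1
  rw [pderiv_altPoly, hh]
  rw [Finset.sum_ite]
  have e1 : (Finset.univ.erase i).filter (fun j => i < j) = Finset.Ioi i := by
    ext j; simp only [Finset.mem_filter, Finset.mem_erase, Finset.mem_univ, true_and,
      Finset.mem_Ioi, and_iff_right_iff_imp]
    exact fun h => ⟨h.ne', trivial⟩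
  have e2 : (Finset.univ.erase i).filter (fun j => ¬ i < j) = Finset.Iio i := by
    ext j; simp only [Finset.mem_filter, Finset.mem_erase, Finset.mem_univ, true_and,
      Finset.mem_Iio]
    constructor
    · rintro ⟨⟨h1, -⟩, h2⟩; exact (not_lt.mp h2).lt_of_ne h1
    · exact fun h => ⟨⟨h.ne, trivial⟩, not_lt.mpr h.le⟩
  rw [e1, e2, Finset.sum_neg_distrib, ← sub_eq_add_neg]

lemma altPoly_ne_zero (N : ℕ) : altPoly N ≠ 0 := by
  rw [altPoly]
  rw [Finset.prod_ne_zero_iff]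
  intro p hp
  simp only [Finset.mem_filter, Finset.mem_univ, true_and] at hp
  exact sub_ne_zero.mpr fun e => hp.ne (X_injective e)

/-- For `N ≥ 2`, the alternating polynomial `a_N` satisfies
`Dᵢ(a_N^{2l+1}) = (2l+1+2κ) a_N^{2l} ∂a_N/∂xᵢ` for each `i`; in particular for
`κ = −l−1/2` one has `Dᵢ(a_N^{2l+1}) = 0` for all `i` and `a_N^{2l+1} ≠ 0`,
so `a_N^{2l+1}` is a singular polynomial for `κ = −l−1/2`. -/
theorem altPoly_singular (N : ℕ) (hN : 2 ≤ N) (κ : ℝ) (l : ℕ) :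
    (∀ i : Fin N,
        dunkl (Fin N) κ i (altPoly N ^ (2 * l + 1)) =
          algebraMap (MvPolynomial (Fin N) ℝ) (FractionRing (MvPolynomial (Fin N) ℝ))
            (((2 * l + 1 : ℝ) + 2 * κ) • (altPoly N ^ (2 * l) * pderiv i (altPoly N)))) ∧
    (κ = -(l : ℝ) - 1 / 2 →
      (∀ i : Fin N, dunkl (Fin N) κ i (altPoly N ^ (2 * l + 1)) = 0) ∧
        altPoly N ^ (2 * l + 1) ≠ 0) := by
  set F := algebraMap (MvPolynomial (Fin N) ℝ) (FractionRing (MvPolynomial (Fin N) ℝ)) with hF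
  set a := altPoly N with haa
  have main : ∀ i : Fin N,
      dunkl (Fin N) κ i (a ^ (2 * l + 1)) =
        F (((2 * l + 1 : ℝ) + 2 * κ) • (a ^ (2 * l) * pderiv i a)) := by
    intro i
    rw [dunkl]
    have hsum : ∑ j ∈ Finset.univ.erase i,
        F (a ^ (2 * l + 1) - rename (Equiv.swap i j) (a ^ (2 * l + 1))) / F (X i - X j)
        = F (2 * a ^ (2 * l)) * F (pderiv i a) := by
      have hterm : ∀ j ∈ Finset.univ.erase i,
          F (a ^ (2 * l + 1) - rename (Equiv.swap i j) (a ^ (2 * l + 1))) / F (X i - X j)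
          = F (2 * a ^ (2 * l)) * (F a / F (X i - X j)) := by
        intro j hj
        have hji : i ≠ j := fun e => (Finset.mem_erase.mp hj).1 e.symm
        have hr : rename (Equiv.swap i j) (a ^ (2 * l + 1)) = -(a ^ (2 * l + 1)) := by
          rw [map_pow, rename_swap_altPoly N hji, Odd.neg_pow ⟨l, by ring⟩]
        rw [hr, sub_neg_eq_add, ← two_mul]
        rw [show (2 : MvPolynomial (Fin N) ℝ) * a ^ (2 * l + 1)
              = (2 * a ^ (2 * l)) * a by ring]
        rw [map_mul, mul_div_assoc]
      rw [Finset.sum_congr rfl hterm, ← Finset.mul_sum, key_sum N i]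
    rw [hsum]
    have hd : pderiv i (a ^ (2 * l + 1))
        = ((2 * l + 1 : ℕ) : MvPolynomial (Fin N) ℝ) * a ^ (2 * l) * pderiv i a := by
      rw [pderiv_pow]; norm_num
    rw [hd, ← map_mul, ← map_mul, ← map_add]
    apply congrArg F
    rw [smul_eq_C_mul]
    simp only [map_add, map_mul, map_one, map_ofNat, map_natCast]
    push_cast
    ring
  refine ⟨main, fun hκ => ⟨fun i => ?_, pow_ne_zero _ (altPoly_ne_zero N)⟩⟩
  rw [main i, hκ]
  have : ((2 * l + 1 : ℝ) + 2 * (-(l : ℝ) - 1 / 2)) = 0 := by ring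
  rw [this, zero_smul, map_zero]
end
end
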